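/- arXiv:1602.02993 — 3 statements merged into one kernel-verified Lean document; each statement's English description precedes it below -/
import Mathlib

section
/- (Cauchy extension) If f is Henstock–Kurzweil integrable on [a,b] for every b with a < b < c, with integral F(a,b), and lim_{b→c⁻} F(a,b) = F exists, then f is Henstock–Kurzweil integrable on [a,c] with integral F. -/
open Set Filter

/-- A tagged division of the compact interval `[a,b]`: partition points
`a = t 0 ≤ t 1 ≤ ⋯ ≤ t n = b` with a tag in each subinterval. -/
structure TaggedDiv1 (a b : ℝ) where
  n : ℕ
  t : Fin (n + 1) → ℝ
  tag : Fin n → ℝ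
  mono : Monotone t
  first : t 0 = a
  last : t (Fin.last n) = b
  tag_mem : ∀ i : Fin n, tag i ∈ Set.Icc (t i.castSucc) (t i.succ)

/-- A tagged division is compatible with the gauge `δ` if each subinterval lies in the
open interval of radius `δ` about its tag. -/
def Compat1 {a b : ℝ} (D : TaggedDiv1 a b) (δ : ℝ → ℝ) : Prop :=
  ∀ i : Fin D.n, Set.Icc (D.t i.castSucc) (D.t i.succ) ⊆
    Set.Ioo (D.tag i - δ (D.tag i)) (D.tag i + δ (D.tag i))

/-- The Riemann sum of `f` over a tagged division of `[a,b]`. -/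
noncomputable def riemannSum1 {a b : ℝ} (f : ℝ → ℝ) (D : TaggedDiv1 a b) : ℝ :=
  ∑ i : Fin D.n, f (D.tag i) * (D.t i.succ - D.t i.castSucc)

/-- `f` has Henstock–Kurzweil integral `A` on `[a,b]`. -/
def HasHK1 (f : ℝ → ℝ) (a b A : ℝ) : Prop :=
  ∀ ε > 0, ∃ δ : ℝ → ℝ, (∀ x ∈ Set.Icc a b, 0 < δ x) ∧
    ∀ D : TaggedDiv1 a b, Compat1 D δ → |riemannSum1 f D - A| < ε

namespace HKAux

lemma div_le {u v : ℝ} (D : TaggedDiv1 u v) : u ≤ v := by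
  have h := D.mono (Fin.zero_le (Fin.last D.n))
  rwa [D.first, D.last] at h

lemma t_mem {u v : ℝ} (D : TaggedDiv1 u v) (i : Fin (D.n + 1)) : D.t i ∈ Icc u v := by
  constructor
  · have := D.mono (Fin.zero_le i); rwa [D.first] at this
  · have := D.mono (Fin.le_last i); rwa [D.last] at this

lemma tag_mem' {u v : ℝ} (D : TaggedDiv1 u v) (i : Fin D.n) : D.tag i ∈ Icc u v :=
  ⟨le_trans (t_mem D _).1 (D.tag_mem i).1, le_trans (D.tag_mem i).2 (t_mem D _).2⟩

lemma compat_mono {u v : ℝ} {D : TaggedDiv1 u v} {δ δ' : ℝ → ℝ} (h : Compat1 D δ)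
    (hle : ∀ x ∈ Icc u v, δ x ≤ δ' x) : Compat1 D δ' := by
  intro i
  refine (h i).trans (Ioo_subset_Ioo ?_ ?_) <;>
    have := hle _ (tag_mem' D i) <;> linarith

def trivialDiv (u : ℝ) : TaggedDiv1 u u where
  n := 0
  t := fun _ => u
  tag := Fin.elim0
  mono := monotone_const
  first := rfl
  last := rfl
  tag_mem := fun i => i.elim0

lemma trivial_compat (u : ℝ) (δ : ℝ → ℝ) : Compat1 (trivialDiv u) δ := fun i => i.elim0

lemma trivial_sum (u : ℝ) (f : ℝ → ℝ) : riemannSum1 f (trivialDiv u) = 0 := by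
  simp [riemannSum1, trivialDiv]

def singleDiv (u v τ : ℝ) (h1 : u ≤ τ) (h2 : τ ≤ v) : TaggedDiv1 u v where
  n := 1
  t := fun i => if (i : ℕ) = 0 then u else v
  tag := fun _ => τ
  mono := by
    intro i j hij
    have hij' : (i : ℕ) ≤ (j : ℕ) := hij
    dsimp only
    split_ifs with h h' h'
    · exact le_rfl
    · exact h1.trans h2
    · omega
    · exact le_rfl
  first := by simp
  last := by simp [Fin.last]
  tag_mem := fun i => by
    fin_cases i
    simpa using ⟨h1, h2⟩

end HKAux

namespace HKAux

variable {u v w : ℝ}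

def catT (D1 : TaggedDiv1 u v) (D2 : TaggedDiv1 v w) (i : Fin (D1.n + D2.n + 1)) : ℝ :=
  if h : (i : ℕ) ≤ D1.n then D1.t ⟨i, by omega⟩
  else D2.t ⟨(i : ℕ) - D1.n, by have := i.isLt; omega⟩

lemma catT_left (D1 : TaggedDiv1 u v) (D2 : TaggedDiv1 v w) (i : Fin (D1.n + D2.n + 1))
    (h : (i : ℕ) ≤ D1.n) : catT D1 D2 i = D1.t ⟨i, by omega⟩ := dif_pos h

lemma catT_right (D1 : TaggedDiv1 u v) (D2 : TaggedDiv1 v w) (i : Fin (D1.n + D2.n + 1))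
    (h : D1.n ≤ (i : ℕ)) :
    catT D1 D2 i = D2.t ⟨(i : ℕ) - D1.n, by have := i.isLt; omega⟩ := by
  unfold catT
  split_ifs with h1
  · have he : (i : ℕ) = D1.n := le_antisymm h1 h
    have e1 : (⟨(i : ℕ), by omega⟩ : Fin (D1.n + 1)) = Fin.last D1.n := by
      simp [Fin.ext_iff, Fin.last, he]
    have e2 : (⟨(i : ℕ) - D1.n, by have := i.isLt; omega⟩ : Fin (D2.n + 1)) = 0 := by
      simp [Fin.ext_iff, he]
    rw [e1, e2, D1.last, D2.first]
  · rfl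

def concatDiv (D1 : TaggedDiv1 u v) (D2 : TaggedDiv1 v w) : TaggedDiv1 u w where
  n := D1.n + D2.n
  t := catT D1 D2
  tag := fun i => if h : (i : ℕ) < D1.n then D1.tag ⟨i, h⟩
    else D2.tag ⟨(i : ℕ) - D1.n, by have := i.isLt; omega⟩
  mono := by
    intro i j hij
    have hij' : (i : ℕ) ≤ (j : ℕ) := hij
    rcases le_or_gt (j : ℕ) D1.n with hj | hj
    · rw [catT_left _ _ i (le_trans hij' hj), catT_left _ _ j hj]
      exact D1.mono (show ((⟨(i:ℕ), _⟩ : Fin (D1.n+1)) ≤ ⟨(j:ℕ), _⟩) from hij')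
    · rcases le_or_gt (i : ℕ) D1.n with hi | hi
      · rw [catT_left _ _ i hi, catT_right _ _ j hj.le]
        calc D1.t ⟨(i:ℕ), by omega⟩ ≤ D1.t (Fin.last D1.n) := D1.mono (Fin.le_last _)
          _ = v := D1.last
          _ = D2.t 0 := D2.first.symm
          _ ≤ D2.t _ := D2.mono (Fin.zero_le _)
      · rw [catT_right _ _ i hi.le, catT_right _ _ j hj.le]
        exact D2.mono (show ((⟨(i:ℕ) - D1.n, _⟩ : Fin (D2.n+1)) ≤ ⟨(j:ℕ) - D1.n, _⟩) by
          simp only [Fin.mk_le_mk]; omega)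
  first := by
    rw [catT_left _ _ 0 (by simp)]
    have : (⟨((0 : Fin (D1.n + D2.n + 1)) : ℕ), by simp⟩ : Fin (D1.n + 1)) = 0 := by
      simp [Fin.ext_iff]
    rw [this, D1.first]
  last := by
    rw [catT_right _ _ (Fin.last _) (by simp [Fin.last])]
    have : (⟨((Fin.last (D1.n + D2.n)) : ℕ) - D1.n, by simp [Fin.last]⟩ : Fin (D2.n + 1))
        = Fin.last D2.n := by simp [Fin.ext_iff, Fin.last]
    rw [this, D2.last]
  tag_mem := by
    intro i
    have hin : (i : ℕ) < D1.n + D2.n := i.isLt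
    have hcs : ((i.castSucc : Fin (D1.n + D2.n + 1)) : ℕ) = (i : ℕ) := rfl
    have hsc : ((i.succ : Fin (D1.n + D2.n + 1)) : ℕ) = (i : ℕ) + 1 := rfl
    split_ifs with h
    · rw [catT_left _ _ _ (by omega), catT_left _ _ _ (by omega)]
      have := D1.tag_mem ⟨(i : ℕ), h⟩
      convert this using 3 <;> simp [Fin.ext_iff, hcs, hsc]
    · push_neg at h
      rw [catT_right _ _ _ (by omega), catT_right _ _ _ (by omega)]
      have := D2.tag_mem ⟨(i : ℕ) - D1.n, by omega⟩
      convert this using 3 <;> simp [Fin.ext_iff, hcs, hsc] <;> omega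

lemma concat_compat {δ : ℝ → ℝ} {D1 : TaggedDiv1 u v} {D2 : TaggedDiv1 v w}
    (h1 : Compat1 D1 δ) (h2 : Compat1 D2 δ) : Compat1 (concatDiv D1 D2) δ := by
  intro (i : Fin (D1.n + D2.n))
  have hin : (i : ℕ) < D1.n + D2.n := i.isLt
  have hcs : ((i.castSucc : Fin (D1.n + D2.n + 1)) : ℕ) = (i : ℕ) := rfl
  have hsc : ((i.succ : Fin (D1.n + D2.n + 1)) : ℕ) = (i : ℕ) + 1 := rfl
  show Icc (catT D1 D2 (@Fin.castSucc (D1.n + D2.n) i)) (catT D1 D2 (@Fin.succ (D1.n + D2.n) i)) ⊆ _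
  by_cases h : (i : ℕ) < D1.n
  · rw [catT_left _ _ _ (by omega), catT_left _ _ _ (by omega)]
    have e : (concatDiv D1 D2).tag i = D1.tag ⟨(i : ℕ), h⟩ := dif_pos h
    rw [e]
    have := h1 ⟨(i : ℕ), h⟩
    convert this using 3 <;> simp [Fin.ext_iff, hcs, hsc]
  · push_neg at h
    rw [catT_right _ _ _ (by omega), catT_right _ _ _ (by omega)]
    have e : (concatDiv D1 D2).tag i = D2.tag ⟨(i : ℕ) - D1.n, by omega⟩ :=
      dif_neg (by omega)
    rw [e]
    have := h2 ⟨(i : ℕ) - D1.n, by omega⟩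
    convert this using 3 <;> simp [Fin.ext_iff, hcs, hsc] <;> omega

lemma concat_sum (f : ℝ → ℝ) (D1 : TaggedDiv1 u v) (D2 : TaggedDiv1 v w) :
    riemannSum1 f (concatDiv D1 D2) = riemannSum1 f D1 + riemannSum1 f D2 := by
  have key : riemannSum1 f (concatDiv D1 D2) = ∑ i : Fin (D1.n + D2.n),
      f ((concatDiv D1 D2).tag i) *
        (catT D1 D2 i.succ - catT D1 D2 i.castSucc) := rfl
  rw [key, Fin.sum_univ_add]
  unfold riemannSum1
  congr 1
  · apply Finset.sum_congr rfl
    intro i _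
    have h : (i : ℕ) < D1.n := i.isLt
    have hcs : ((Fin.castAdd D2.n i).castSucc : ℕ) = (i : ℕ) := rfl
    have hsc : ((Fin.castAdd D2.n i).succ : ℕ) = (i : ℕ) + 1 := rfl
    have e : (concatDiv D1 D2).tag (Fin.castAdd D2.n i) = D1.tag ⟨(i : ℕ), h⟩ :=
      dif_pos h
    rw [e, catT_left _ _ _ (by rw [hsc]; omega), catT_left _ _ _ (by rw [hcs]; omega)]
    have e1 : D1.tag ⟨(i : ℕ), h⟩ = D1.tag i := by congr 1
    have e2 : (⟨((Fin.castAdd D2.n i).succ : ℕ), by rw [hsc]; omega⟩ : Fin (D1.n + 1))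
        = i.succ := by simp [Fin.ext_iff, hsc]
    have e3 : (⟨((Fin.castAdd D2.n i).castSucc : ℕ), by rw [hcs]; omega⟩ : Fin (D1.n + 1))
        = i.castSucc := by simp [Fin.ext_iff, hcs]
    rw [e1, e2, e3]
  · apply Finset.sum_congr rfl
    intro i _
    have h : (i : ℕ) < D2.n := i.isLt
    have hcs : ((Fin.natAdd D1.n i).castSucc : ℕ) = D1.n + (i : ℕ) := rfl
    have hsc : ((Fin.natAdd D1.n i).succ : ℕ) = D1.n + (i : ℕ) + 1 := rfl
    have e : (concatDiv D1 D2).tag (Fin.natAdd D1.n i)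
        = D2.tag ⟨((Fin.natAdd D1.n i : Fin (D1.n + D2.n)) : ℕ) - D1.n, by
            have : ((Fin.natAdd D1.n i : Fin (D1.n + D2.n)) : ℕ) = D1.n + (i:ℕ) := rfl
            omega⟩ := dif_neg (by
          have : ((Fin.natAdd D1.n i : Fin (D1.n + D2.n)) : ℕ) = D1.n + (i:ℕ) := rfl
          omega)
    rw [e, catT_right _ _ _ (by rw [hsc]; omega), catT_right _ _ _ (by rw [hcs]; omega)]
    have e1 : (⟨((Fin.natAdd D1.n i : Fin (D1.n + D2.n)) : ℕ) - D1.n, by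
        have : ((Fin.natAdd D1.n i : Fin (D1.n + D2.n)) : ℕ) = D1.n + (i:ℕ) := rfl
        omega⟩ : Fin D2.n) = i := by
      simp [Fin.ext_iff]
    have e2 : (⟨((Fin.natAdd D1.n i).succ : ℕ) - D1.n, by rw [hsc]; omega⟩ : Fin (D2.n + 1))
        = i.succ := by simp only [Fin.ext_iff, Fin.val_succ, Fin.val_mk, Fin.coe_natAdd]; omega
    have e3 : (⟨((Fin.natAdd D1.n i).castSucc : ℕ) - D1.n, by rw [hcs]; omega⟩ : Fin (D2.n + 1))
        = i.castSucc := by simp [Fin.ext_iff, hcs]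
    rw [e1, e2, e3]

end HKAux

namespace HKAux

lemma cousin {u v : ℝ} (huv : u ≤ v) (δ : ℝ → ℝ) (hδ : ∀ x ∈ Icc u v, 0 < δ x) :
    ∃ D : TaggedDiv1 u v, Compat1 D δ := by
  set S : Set ℝ := {x | x ∈ Icc u v ∧ ∃ D : TaggedDiv1 u x, Compat1 D δ} with hS
  have hu : u ∈ S := ⟨⟨le_rfl, huv⟩, trivialDiv u, trivial_compat u δ⟩
  have hne : S.Nonempty := ⟨u, hu⟩
  have hbdd : BddAbove S := ⟨v, fun x hx => hx.1.2⟩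
  set s := sSup S with hs
  have hus : u ≤ s := le_csSup hbdd hu
  have hsv : s ≤ v := csSup_le hne (fun x hx => hx.1.2)
  have hδs : 0 < δ s := hδ s ⟨hus, hsv⟩
  obtain ⟨x, hxS, hxs⟩ : ∃ x ∈ S, s - δ s < x :=
    exists_lt_of_lt_csSup hne (by linarith)
  have hxle : x ≤ s := le_csSup hbdd hxS
  obtain ⟨⟨hux, hxv⟩, Dx, hDx⟩ := hxS
  -- extend Dx by one interval [x, y] with tag s
  have key : ∀ y : ℝ, x ≤ y → y ≤ v → s ≤ y → y < s + δ s → y ∈ S := by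
    intro y hxy hyv hsy hyd
    refine ⟨⟨hux.trans hxy, hyv⟩, concatDiv Dx (singleDiv x y s hxle hsy), ?_⟩
    apply concat_compat hDx
    intro i
    fin_cases i
    intro z hz
    have hz0 : x ≤ z := by simpa [singleDiv] using hz.1
    have hz1 : z ≤ y := by simpa [singleDiv] using hz.2
    have htag : (singleDiv x y s hxle hsy).tag ⟨0, by norm_num [singleDiv]⟩ = s := rfl
    refine mem_Ioo.mpr ⟨?_, ?_⟩ <;> rw [htag] <;> linarith
  by_cases hsv' : s < v
  · exfalso
    set y := min v (s + δ s / 2) with hy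
    have hyS : y ∈ S := by
      apply key
      · exact hxle.trans (le_min hsv (by linarith))
      · exact min_le_left _ _
      · exact le_min hsv (by linarith)
      · calc y ≤ s + δ s / 2 := min_le_right _ _
          _ < s + δ s := by linarith
    have : y ≤ s := le_csSup hbdd hyS
    have : s < y := lt_min hsv' (by linarith)
    linarith
  · have hsv2 : s = v := le_antisymm hsv (not_lt.mp hsv')
    have hvS : v ∈ S := by
      apply key v hxv le_rfl (le_of_eq hsv2) (by rw [← hsv2]; linarith)
    exact hvS.2

end HKAux

namespace HKAux

variable {u v : ℝ}

def clampLow (D : TaggedDiv1 u v) (m : ℝ) (h1 : u ≤ m) (h2 : m ≤ v) : TaggedDiv1 u m where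
  n := D.n
  t := fun i => min (D.t i) m
  tag := fun i => min (D.tag i) m
  mono := fun i j hij => min_le_min (D.mono hij) le_rfl
  first := by show min (D.t 0) m = u; rw [D.first]; exact min_eq_left h1
  last := by show min (D.t (Fin.last D.n)) m = m; rw [D.last]; exact min_eq_right h2
  tag_mem := fun i => ⟨min_le_min (D.tag_mem i).1 le_rfl, min_le_min (D.tag_mem i).2 le_rfl⟩

def clampHigh (D : TaggedDiv1 u v) (m : ℝ) (h1 : u ≤ m) (h2 : m ≤ v) : TaggedDiv1 m v where
  n := D.n
  t := fun i => max (D.t i) m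
  tag := fun i => max (D.tag i) m
  mono := fun i j hij => max_le_max (D.mono hij) le_rfl
  first := by show max (D.t 0) m = m; rw [D.first]; exact max_eq_right h1
  last := by show max (D.t (Fin.last D.n)) m = v; rw [D.last]; exact max_eq_left h2
  tag_mem := fun i => ⟨max_le_max (D.tag_mem i).1 le_rfl, max_le_max (D.tag_mem i).2 le_rfl⟩

variable {D : TaggedDiv1 u v} {m : ℝ} {δ : ℝ → ℝ}

lemma clampLow_compat (h1 : u ≤ m) (h2 : m ≤ v) (hD : Compat1 D δ)
    (hpos : ∀ x ∈ Icc u v, 0 < δ x)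
    (hstrad : ∀ i : Fin D.n, D.t i.castSucc < m → m < D.t i.succ → D.tag i = m) :
    Compat1 (clampLow D m h1 h2) δ := by
  intro i
  show Icc (min (D.t i.castSucc) m) (min (D.t i.succ) m) ⊆
    Ioo (min (D.tag i) m - δ (min (D.tag i) m)) (min (D.tag i) m + δ (min (D.tag i) m))
  rcases le_or_gt (D.t i.succ) m with hc1 | hc1
  · have e1 : min (D.t i.succ) m = D.t i.succ := min_eq_left hc1
    have e2 : min (D.t i.castSucc) m = D.t i.castSucc :=
      min_eq_left ((D.mono i.castSucc_le_succ).trans hc1)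
    have e3 : min (D.tag i) m = D.tag i := min_eq_left ((D.tag_mem i).2.trans hc1)
    rw [e1, e2, e3]; exact hD i
  · rcases le_or_gt m (D.t i.castSucc) with hc2 | hc2
    · have e1 : min (D.t i.succ) m = m := min_eq_right hc1.le
      have e2 : min (D.t i.castSucc) m = m := min_eq_right hc2
      have e3 : min (D.tag i) m = m := min_eq_right (hc2.trans (D.tag_mem i).1)
      rw [e1, e2, e3]
      have hmpos := hpos m ⟨h1, h2⟩
      intro z hz
      simp only [mem_Icc] at hz
      exact ⟨by linarith [hz.1], by linarith [hz.2]⟩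
    · have htag := hstrad i hc2 hc1
      have e1 : min (D.t i.succ) m = m := min_eq_right hc1.le
      have e2 : min (D.t i.castSucc) m = D.t i.castSucc := min_eq_left hc2.le
      have e3 : min (D.tag i) m = m := by rw [htag]; exact min_self m
      rw [e1, e2, e3]
      intro z hz
      have h := hD i ⟨hz.1, hz.2.trans hc1.le⟩
      rwa [htag] at h

lemma clampHigh_compat (h1 : u ≤ m) (h2 : m ≤ v) (hD : Compat1 D δ)
    (hpos : ∀ x ∈ Icc u v, 0 < δ x)
    (hstrad : ∀ i : Fin D.n, D.t i.castSucc < m → m < D.t i.succ → D.tag i = m) :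
    Compat1 (clampHigh D m h1 h2) δ := by
  intro i
  show Icc (max (D.t i.castSucc) m) (max (D.t i.succ) m) ⊆
    Ioo (max (D.tag i) m - δ (max (D.tag i) m)) (max (D.tag i) m + δ (max (D.tag i) m))
  rcases le_or_gt m (D.t i.castSucc) with hc1 | hc1
  · have e1 : max (D.t i.castSucc) m = D.t i.castSucc := max_eq_left hc1
    have e2 : max (D.t i.succ) m = D.t i.succ :=
      max_eq_left (hc1.trans (D.mono i.castSucc_le_succ))
    have e3 : max (D.tag i) m = D.tag i := max_eq_left (hc1.trans (D.tag_mem i).1)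
    rw [e1, e2, e3]; exact hD i
  · rcases le_or_gt (D.t i.succ) m with hc2 | hc2
    · have e1 : max (D.t i.castSucc) m = m := max_eq_right hc1.le
      have e2 : max (D.t i.succ) m = m := max_eq_right hc2
      have e3 : max (D.tag i) m = m := max_eq_right ((D.tag_mem i).2.trans hc2)
      rw [e1, e2, e3]
      have hmpos := hpos m ⟨h1, h2⟩
      intro z hz
      simp only [mem_Icc] at hz
      exact ⟨by linarith [hz.1], by linarith [hz.2]⟩
    · have htag := hstrad i hc1 hc2
      have e1 : max (D.t i.castSucc) m = m := max_eq_right hc1.le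
      have e2 : max (D.t i.succ) m = D.t i.succ := max_eq_left hc2.le
      have e3 : max (D.tag i) m = m := by rw [htag]; exact max_self m
      rw [e1, e2, e3]
      intro z hz
      have h := hD i ⟨hc1.le.trans hz.1, hz.2⟩
      rwa [htag] at h

lemma clamp_sum (f : ℝ → ℝ) (h1 : u ≤ m) (h2 : m ≤ v)
    (hstrad : ∀ i : Fin D.n, D.t i.castSucc < m → m < D.t i.succ → D.tag i = m) :
    riemannSum1 f (clampLow D m h1 h2) + riemannSum1 f (clampHigh D m h1 h2)
      = riemannSum1 f D := by
  unfold riemannSum1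
  show (∑ i : Fin D.n, f (min (D.tag i) m) * (min (D.t i.succ) m - min (D.t i.castSucc) m))
    + (∑ i : Fin D.n, f (max (D.tag i) m) * (max (D.t i.succ) m - max (D.t i.castSucc) m))
    = _
  rw [← Finset.sum_add_distrib]
  apply Finset.sum_congr rfl
  intro i _
  rcases le_or_gt (D.t i.succ) m with hc1 | hc1
  · have e1 : min (D.t i.succ) m = D.t i.succ := min_eq_left hc1
    have e2 : min (D.t i.castSucc) m = D.t i.castSucc :=
      min_eq_left ((D.mono i.castSucc_le_succ).trans hc1)
    have e3 : min (D.tag i) m = D.tag i := min_eq_left ((D.tag_mem i).2.trans hc1)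
    have e4 : max (D.t i.succ) m = m := max_eq_right hc1
    have e5 : max (D.t i.castSucc) m = m :=
      max_eq_right ((D.mono i.castSucc_le_succ).trans hc1)
    rw [e1, e2, e3, e4, e5]; ring
  · rcases le_or_gt m (D.t i.castSucc) with hc2 | hc2
    · have e1 : min (D.t i.succ) m = m := min_eq_right hc1.le
      have e2 : min (D.t i.castSucc) m = m := min_eq_right hc2
      have e4 : max (D.t i.succ) m = D.t i.succ := max_eq_left hc1.le
      have e5 : max (D.t i.castSucc) m = D.t i.castSucc := max_eq_left hc2
      have e6 : max (D.tag i) m = D.tag i := max_eq_left (hc2.trans (D.tag_mem i).1)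
      rw [e1, e2, e4, e5, e6]; ring
    · have htag := hstrad i hc2 hc1
      have e1 : min (D.t i.succ) m = m := min_eq_right hc1.le
      have e2 : min (D.t i.castSucc) m = D.t i.castSucc := min_eq_left hc2.le
      have e4 : max (D.t i.succ) m = D.t i.succ := max_eq_left hc1.le
      have e5 : max (D.t i.castSucc) m = m := max_eq_right hc2.le
      have e3 : min (D.tag i) m = m := by rw [htag]; exact min_self m
      have e6 : max (D.tag i) m = m := by rw [htag]; exact max_self m
      rw [e1, e2, e3, e4, e5, e6, htag]; ring

end HKAux

namespace HKAux

lemma top_split {a c : ℝ} (hac : a < c) (δ f : ℝ → ℝ)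
    (hpos : ∀ x ∈ Icc a c, 0 < δ x)
    (hforce : ∀ x ∈ Ico a c, x + δ x ≤ c)
    (D : TaggedDiv1 a c) (hD : Compat1 D δ) :
    ∃ b, a ≤ b ∧ c - δ c < b ∧ b < c ∧ ∃ D' : TaggedDiv1 a b, Compat1 D' δ ∧
      riemannSum1 f D = riemannSum1 f D' + f c * (c - b) := by
  classical
  -- any subinterval reaching c has tag c
  have hctag : ∀ i : Fin D.n, D.t i.succ = c → D.tag i = c := by
    intro i hi
    by_contra hne
    have htle : D.tag i ≤ c := (tag_mem' D i).2
    have htlt : D.tag i < c := lt_of_le_of_ne htle hne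
    have hta : a ≤ D.tag i := (tag_mem' D i).1
    have h1 := hforce (D.tag i) ⟨hta, htlt⟩
    have h2 := hD i ⟨(D.mono i.castSucc_le_succ).trans hi.le, hi.ge⟩
    simp only [mem_Ioo] at h2
    linarith [h2.2]
  set T : Finset (Fin (D.n + 1)) := Finset.univ.filter (fun i => D.t i < c) with hT
  have h0T : (0 : Fin (D.n + 1)) ∈ T := by
    simp [hT, D.first, hac]
  have hTne : T.Nonempty := ⟨0, h0T⟩
  set j := T.max' hTne with hj
  have hjT : j ∈ T := T.max'_mem hTne
  have hjlt : D.t j < c := by simpa [hT] using hjT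
  have hmax : ∀ i ∈ T, i ≤ j := fun i hi => T.le_max' i hi
  have hgt : ∀ i : Fin (D.n + 1), j < i → D.t i = c := by
    intro i hi
    have hle : D.t i ≤ c := (t_mem D i).2
    rcases lt_or_eq_of_le hle with h | h
    · exact absurd (hmax i (by simp [hT, h])) (not_le.mpr hi)
    · exact h
  have hjn : (j : ℕ) < D.n := by
    rcases Nat.lt_or_ge (j : ℕ) D.n with h | h
    · exact h
    · exfalso
      have : j = Fin.last D.n := by
        have := j.isLt; simp [Fin.ext_iff, Fin.last]; omega
      rw [this, D.last] at hjlt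
      exact lt_irrefl _ hjlt
  set i₀ : Fin D.n := ⟨(j : ℕ), hjn⟩ with hi₀
  have hcs₀ : i₀.castSucc = j := by simp [Fin.ext_iff, hi₀]
  have hsucc₀ : D.t i₀.succ = c := by
    apply hgt
    simp [Fin.lt_def, hi₀]
  have htagc : D.tag i₀ = c := hctag i₀ hsucc₀
  set b := D.t j with hb
  have hb1 : a ≤ b := (t_mem D j).1
  have hb2 : b < c := hjlt
  have hbδ : c - δ c < b := by
    have h2 := hD i₀ (show b ∈ Icc (D.t i₀.castSucc) (D.t i₀.succ) by
      rw [hcs₀, hsucc₀]; exact ⟨le_rfl, hb2.le⟩)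
    rw [htagc] at h2
    exact h2.1
  have hstrad : ∀ i : Fin D.n, D.t i.castSucc < b → b < D.t i.succ → D.tag i = b := by
    intro i h1 h2
    exfalso
    have hji : (j : ℕ) ≤ (i : ℕ) := by
      by_contra hcon
      push_neg at hcon
      have : i.succ ≤ j := by rw [Fin.le_def]; simpa using hcon
      have := D.mono this
      rw [← hb] at this
      linarith
    have : j ≤ i.castSucc := by rw [Fin.le_def]; simpa using hji
    have := D.mono this
    rw [← hb] at this
    linarith
  refine ⟨b, hb1, hbδ, hb2, clampLow D b hb1 hb2.le,
    clampLow_compat hb1 hb2.le hD hpos hstrad, ?_⟩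
  have hsum := clamp_sum (D := D) f hb1 hb2.le hstrad
  rw [← hsum]
  congr 1
  -- riemannSum1 f (clampHigh D b _ _) = f c * (c - b)
  have : riemannSum1 f (clampHigh D b hb1 hb2.le)
      = ∑ i : Fin D.n, f (max (D.tag i) b) * (max (D.t i.succ) b - max (D.t i.castSucc) b) := rfl
  rw [this]
  rw [Finset.sum_eq_single i₀]
  · rw [hsucc₀, hcs₀, ← hb, htagc]
    rw [max_eq_left hb2.le, max_self]
  · intro i _ hne
    rcases Nat.lt_or_ge (i : ℕ) (j : ℕ) with h | h
    · have hle : i.succ ≤ j := by rw [Fin.le_def]; simpa using h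
      have h1 : D.t i.succ ≤ b := hb ▸ D.mono hle
      have h2 : D.t i.castSucc ≤ b := (D.mono i.castSucc_le_succ).trans h1
      rw [max_eq_right h1, max_eq_right h2]
      ring
    · have hgt' : (j : ℕ) < (i : ℕ) := by
        rcases Nat.lt_or_ge (j:ℕ) (i:ℕ) with h' | h'
        · exact h'
        · exfalso; exact hne (by simp [Fin.ext_iff, hi₀]; omega)
      have e1 : D.t i.castSucc = c := hgt _ (by rw [Fin.lt_def]; simpa using hgt')
      have e2 : D.t i.succ = c := hgt _ (by rw [Fin.lt_def]; simp; omega)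
      rw [e1, e2]
      ring
  · intro h
    exact absurd (Finset.mem_univ i₀) h

end HKAux

namespace HKAux

noncomputable def Ghat (G : ℕ → ℝ → ℝ) (cs : ℕ → ℝ) : ℕ → ℝ → ℝ :=
  fun k => Nat.rec (fun _ => (1:ℝ))
    (fun k ih x => if x ≤ cs k then min (G (k+1) x) (ih x) else G (k+1) x) k

lemma Ghat_zero (G : ℕ → ℝ → ℝ) (cs : ℕ → ℝ) (x : ℝ) : Ghat G cs 0 x = 1 := rfl

lemma Ghat_succ (G : ℕ → ℝ → ℝ) (cs : ℕ → ℝ) (k : ℕ) (x : ℝ) :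
    Ghat G cs (k+1) x = if x ≤ cs k then min (G (k+1) x) (Ghat G cs k x) else G (k+1) x := rfl

lemma Ghat_pos (G : ℕ → ℝ → ℝ) (cs : ℕ → ℝ) {x : ℝ}
    (hG : ∀ j, 1 ≤ j → x ≤ cs j → 0 < G j x) (hcs : Monotone cs) :
    ∀ k, (k = 0 ∨ x ≤ cs k) → 0 < Ghat G cs k x := by
  intro k
  induction k with
  | zero => intro _; rw [Ghat_zero]; norm_num
  | succ k ih =>
    rintro (h | h)
    · exact absurd h (by omega)
    · rw [Ghat_succ]
      split_ifs with hx
      · exact lt_min (hG (k+1) (by omega) h) (ih (Or.inr hx))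
      · exact hG (k+1) (by omega) h

lemma Ghat_antitone (G : ℕ → ℝ → ℝ) (cs : ℕ → ℝ) {x : ℝ} (hcs : Monotone cs)
    {j k : ℕ} (hjk : j ≤ k) (hx : x ≤ cs j) : Ghat G cs k x ≤ Ghat G cs j x := by
  induction k, hjk using Nat.le_induction with
  | base => exact le_rfl
  | succ k hjk ih =>
    have hxk : x ≤ cs k := hx.trans (hcs hjk)
    calc Ghat G cs (k+1) x = min (G (k+1) x) (Ghat G cs k x) := by
          rw [Ghat_succ, if_pos hxk]
      _ ≤ Ghat G cs k x := min_le_right _ _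
      _ ≤ Ghat G cs j x := ih

lemma Ghat_le_G (G : ℕ → ℝ → ℝ) (cs : ℕ → ℝ) {x : ℝ} {j : ℕ} (hj : 1 ≤ j) :
    Ghat G cs j x ≤ G j x := by
  obtain ⟨j', rfl⟩ : ∃ j', j = j' + 1 := ⟨j - 1, by omega⟩
  rw [Ghat_succ]
  split_ifs with hx
  · exact min_le_left _ _
  · exact le_rfl

lemma Ghat_le (G : ℕ → ℝ → ℝ) (cs : ℕ → ℝ) {x : ℝ} (hcs : Monotone cs)
    {j k : ℕ} (hj : 1 ≤ j) (hjk : j ≤ k) (hx : x ≤ cs j) : Ghat G cs k x ≤ G j x :=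
  (Ghat_antitone G cs hcs hjk hx).trans (Ghat_le_G G cs hj)

end HKAux

open HKAux

/-- **The Cauchy extension.** If `f` is HK-integrable on `[a,b]` for every `a < b < c`, with
integral `F b`, and `F b → L` as `b → c⁻`, then `f` is HK-integrable on `[a,c]` with
integral `L`. -/
theorem cauchy_extension (a c : ℝ) (hac : a < c) (f F : ℝ → ℝ) (L : ℝ)
    (hint : ∀ b, a < b → b < c → HasHK1 f a b (F b))
    (hlim : Filter.Tendsto F (nhdsWithin c (Set.Iio c)) (nhds L)) :
    HasHK1 f a c L := by

  classical
  intro ε hε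
  set η := ε / 8 with hη
  have hηpos : 0 < η := by positivity
  have hca : 0 < c - a := by linarith
  -- the grid sequence
  set cs : ℕ → ℝ := fun k => c - (c - a) / 2 ^ k with hcs
  have hgap : ∀ k, c - cs k = (c - a) / 2 ^ k := by intro k; simp [hcs]
  have hcs0 : cs 0 = a := by simp [hcs]
  have hcsm : StrictMono cs := by
    intro i j hij
    have h2 : (2:ℝ) ^ i < 2 ^ j := by
      apply pow_lt_pow_right₀ (by norm_num) hij
    have h2i : (0:ℝ) < 2 ^ i := by positivity
    have hlt : (c - a) / 2 ^ j < (c - a) / 2 ^ i := div_lt_div_of_pos_left hca h2i h2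
    simp only [hcs]
    linarith
  have hcslt : ∀ k, cs k < c := by
    intro k
    have : (0:ℝ) < (c - a) / 2 ^ k := by positivity
    simp only [hcs]; linarith
  have hcsa : ∀ k, a ≤ cs k := by
    intro k
    rw [← hcs0]
    exact hcsm.monotone (Nat.zero_le k)
  have hagt : ∀ k, 1 ≤ k → a < cs k := by
    intro k hk
    rw [← hcs0]
    exact hcsm (by omega)
  have hspace : ∀ k, cs (k+1) - cs k = (c - a) / 2 ^ (k+1) := by
    intro k
    have h1 := hgap k
    have h2 := hgap (k+1)
    have e : (c - a) / 2 ^ k = 2 * ((c - a) / 2 ^ (k+1)) := by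
      rw [pow_succ]; field_simp
    linarith
  -- the gauges on [a, cs k]
  have hGex : ∀ k : ℕ, ∃ G : ℝ → ℝ, 1 ≤ k →
      (∀ x ∈ Set.Icc a (cs k), 0 < G x) ∧
      ∀ D : TaggedDiv1 a (cs k), Compat1 D G → |riemannSum1 f D - F (cs k)| < η / 2 ^ k := by
    intro k
    by_cases hk : 1 ≤ k
    · obtain ⟨G, hG1, hG2⟩ := hint (cs k) (hagt k hk) (hcslt k) (η / 2 ^ k) (by positivity)
      exact ⟨G, fun _ => ⟨hG1, hG2⟩⟩
    · exact ⟨fun _ => 1, fun h => absurd h hk⟩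
  choose G hG using hGex
  have hGpos : ∀ k, 1 ≤ k → ∀ x ∈ Set.Icc a (cs k), 0 < G k x := fun k hk => (hG k hk).1
  have hGspec : ∀ k, 1 ≤ k → ∀ D : TaggedDiv1 a (cs k), Compat1 D (G k) →
      |riemannSum1 f D - F (cs k)| < η / 2 ^ k := fun k hk => (hG k hk).2
  -- the index function K
  have hKex : ∀ x : ℝ, x < c → ∃ k, x < cs k := by
    intro x hx
    obtain ⟨n, hn⟩ := exists_pow_lt_of_lt_one (show 0 < (c - x) / (c - a) from div_pos (by linarith) hca)
      (show (1:ℝ)/2 < 1 by norm_num)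
    refine ⟨n, ?_⟩
    have h1 : (c - a) * ((1:ℝ)/2) ^ n < (c - a) * ((c - x)/(c - a)) :=
      mul_lt_mul_of_pos_left hn hca
    have h2 : (c - a) * ((c - x)/(c - a)) = c - x := by field_simp
    have h3 : (c - a) * ((1:ℝ)/2) ^ n = (c - a) / 2 ^ n := by
      rw [div_pow, one_pow]; ring
    simp only [hcs]
    linarith
  set K : ℝ → ℕ := fun x => if hx : x < c then Nat.find (hKex x hx) else 0 with hK
  have hKspec : ∀ x, ∀ hx : x < c, x < cs (K x) := by
    intro x hx
    simp only [hK, dif_pos hx]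
    exact Nat.find_spec (hKex x hx)
  have hKmin : ∀ x, ∀ _ : x < c, ∀ k, x < cs k → K x ≤ k := by
    intro x hx k h
    simp only [hK, dif_pos hx]
    exact Nat.find_min' _ h
  have hK1 : ∀ x, a ≤ x → x < c → 1 ≤ K x := by
    intro x hx1 hx2
    by_contra h
    have hz : K x = 0 := by omega
    have := hKspec x hx2
    rw [hz, hcs0] at this
    linarith
  have hKlb : ∀ x, a ≤ x → ∀ hx : x < c, cs (K x - 1) ≤ x := by
    intro x hx1 hx2
    by_contra h
    push_neg at h
    have := hKmin x hx2 _ h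
    have h1 := hK1 x hx1 hx2
    omega
  have hKub : ∀ x, a ≤ x → ∀ hx2 : x < c, ∀ k, cs k ≤ x → k < K x := by
    intro x hx1 hx2 k hk
    by_contra h
    push_neg at h
    have := (hcsm.monotone h).trans hk
    have := hKspec x hx2
    linarith
  -- quantity controlling the last interval
  obtain ⟨δ₀, hδ₀pos, hδ₀⟩ := Metric.tendsto_nhdsWithin_nhds.mp hlim (ε/4) (by positivity)
  set δc := min δ₀ (min (c - cs 1) (ε / (4 * (|f c| + 1)))) with hδc
  have hδcpos : 0 < δc := by
    apply lt_min hδ₀pos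
    apply lt_min (by linarith [hcslt 1])
    positivity
  -- the gauge
  set gd : ℝ → ℝ := fun x => if x = cs (K x - 1) then cs (K x) - x
    else min (cs (K x) - x) (x - cs (K x - 1)) with hgd
  set δ : ℝ → ℝ := fun x => if x < a then 1
    else if x < c then min (Ghat G cs (K x + 1) x) (gd x) else δc with hδ
  have hδeq : ∀ x, a ≤ x → x < c → δ x = min (Ghat G cs (K x + 1) x) (gd x) := by
    intro x h1 h2
    simp only [hδ]
    rw [if_neg (not_lt.mpr h1), if_pos h2]
  have hδceq : δ c = δc := by
    simp only [hδ]
    rw [if_neg (not_lt.mpr hac.le), if_neg (lt_irrefl c)]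
  have hgdpos : ∀ x, a ≤ x → ∀ hx : x < c, 0 < gd x := by
    intro x h1 h2
    have hs := hKspec x h2
    have hl := hKlb x h1 h2
    simp only [hgd]
    split_ifs with he
    · linarith
    · refine lt_min (by linarith) ?_
      rcases lt_or_eq_of_le hl with h | h
      · linarith
      · exact absurd h.symm he
  have hδpos : ∀ x ∈ Set.Icc a c, 0 < δ x := by
    rintro x ⟨hx1, hx2⟩
    rcases lt_or_eq_of_le hx2 with h | h
    · rw [hδeq x hx1 h]
      apply lt_min
      · apply Ghat_pos G cs (fun j hj hxj => hGpos j hj x ⟨hx1, hxj⟩) hcsm.monotone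
        exact Or.inr ((hKspec x h).le.trans (hcsm.monotone (Nat.le_succ _)))
      · exact hgdpos x hx1 h
    · rw [h, hδceq]; exact hδcpos
  have hgd_le : ∀ x, a ≤ x → ∀ hx : x < c, gd x ≤ cs (K x) - x := by
    intro x h1 h2
    simp only [hgd]
    split_ifs
    · exact le_rfl
    · exact min_le_left _ _
  have hδ_le_gd : ∀ x, a ≤ x → ∀ hx : x < c, δ x ≤ gd x := by
    intro x h1 h2
    rw [hδeq x h1 h2]
    exact min_le_right _ _
  have hforce : ∀ x ∈ Set.Ico a c, x + δ x ≤ c := by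
    rintro x ⟨h1, h2⟩
    have := (hδ_le_gd x h1 h2).trans (hgd_le x h1 h2)
    have := hcslt (K x)
    linarith
  -- grid forcing
  have hgrid : ∀ x, a ≤ x → ∀ hx2 : x < c, ∀ k : ℕ, x ≠ cs k → δ x ≤ |x - cs k| := by
    intro x hx1 hx2 k hne
    have h1 : δ x ≤ gd x := hδ_le_gd x hx1 hx2
    have hs := hKspec x hx2
    have hl := hKlb x hx1 hx2
    have hk1 := hK1 x hx1 hx2
    rcases Nat.lt_or_ge k (K x) with hkK | hkK
    · -- k ≤ K x - 1 : cs k ≤ cs (K x - 1) ≤ x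
      have hcs_le : cs k ≤ cs (K x - 1) := hcsm.monotone (by omega)
      have hxk : cs k ≤ x := hcs_le.trans hl
      have habs : |x - cs k| = x - cs k := abs_of_nonneg (by linarith)
      rw [habs]
      simp only [hgd] at h1
      split_ifs at h1 with he
      · -- x = cs (K x - 1); then k ≤ K x - 2 since x ≠ cs k
        have hkne : k ≠ K x - 1 := by
          intro hcon
          exact hne (by rw [hcon, ← he])
        have hk2 : k + 1 ≤ K x - 1 := by omega
        have hK2 : 2 ≤ K x := by omega
        -- x - cs k ≥ cs (K x -1) - cs (K x - 2) = (c-a)/2^(K x -1) ≥ (c-a)/2^(K x) = cs (K x) - x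
        have e1 : cs (K x - 1) - cs (K x - 2) = (c - a) / 2 ^ (K x - 1) := by
          have := hspace (K x - 2)
          have h3 : K x - 2 + 1 = K x - 1 := by omega
          rw [h3] at this
          exact this
        have e2 : cs (K x) - cs (K x - 1) = (c - a) / 2 ^ (K x) := by
          have := hspace (K x - 1)
          have h3 : K x - 1 + 1 = K x := by omega
          rw [h3] at this
          exact this
        have e3 : cs k ≤ cs (K x - 2) := hcsm.monotone (by omega)
        have e4 : (c - a) / 2 ^ (K x) ≤ (c - a) / 2 ^ (K x - 1) := by
          apply div_le_div_of_nonneg_left hca.le (by positivity)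
          apply pow_le_pow_right₀ (by norm_num) (by omega)
        have e5 : cs (K x) - cs (K x - 1) ≤ cs (K x - 1) - cs (K x - 2) := by
          rw [e1, e2]; exact e4
        linarith [h1, e5, e3, he]
      · have := h1.trans (min_le_right _ _)
        linarith
    · -- K x ≤ k : x < cs (K x) ≤ cs k
      have hxk : x < cs k := hs.trans_le (hcsm.monotone hkK)
      have habs : |x - cs k| = cs k - x := by
        rw [abs_of_nonpos (by linarith)]; ring
      rw [habs]
      have h2 := (h1.trans (hgd_le x hx1 hx2))
      have : cs (K x) ≤ cs k := hcsm.monotone hkK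
      linarith
  -- fineness w.r.t. band gauges
  have hfine : ∀ k : ℕ, ∀ x, cs k ≤ x → x ≤ cs (k+1) → δ x ≤ G (k+1) x := by
    intro k x hx1 hx2
    have hxa : a ≤ x := (hcsa k).trans hx1
    have hxc : x < c := lt_of_le_of_lt hx2 (hcslt (k+1))
    have hKge : k + 1 ≤ K x := hKub x hxa hxc k hx1
    have hle : δ x ≤ Ghat G cs (K x + 1) x := by
      rw [hδeq x hxa hxc]; exact min_le_left _ _
    exact hle.trans (Ghat_le G cs hcsm.monotone (by omega) (by omega) hx2)
  -- compatible divisions contained in band k+1 are G (k+1)-fine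
  have hupg : ∀ k : ℕ, ∀ u' v' : ℝ, cs k ≤ u' → v' ≤ cs (k+1) →
      ∀ Q : TaggedDiv1 u' v', Compat1 Q δ → Compat1 Q (G (k+1)) := by
    intro k u' v' h1 h2 Q hQ
    exact compat_mono hQ (fun x hx => hfine k x (h1.trans hx.1) (hx.2.trans h2))
  -- band lemma A (full band)
  have bandA : ∀ k : ℕ, 1 ≤ k → ∀ Q : TaggedDiv1 (cs k) (cs (k+1)), Compat1 Q (G (k+1)) →
      |riemannSum1 f Q - (F (cs (k+1)) - F (cs k))| ≤ η / 2 ^ (k+1) + η / 2 ^ k := by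
    intro k hk Q hQ
    obtain ⟨P, hP⟩ := cousin (hcsa k) (fun x => min (G k x) (G (k+1) x)) (by
      rintro x ⟨h1, h2⟩
      exact lt_min (hGpos k hk x ⟨h1, h2⟩)
        (hGpos (k+1) (by omega) x ⟨h1, h2.trans (hcsm (by omega)).le⟩))
    have hPk : Compat1 P (G k) := compat_mono hP (fun x _ => min_le_left _ _)
    have hPk1 : Compat1 P (G (k+1)) := compat_mono hP (fun x _ => min_le_right _ _)
    have h1 := hGspec (k+1) (by omega) (concatDiv P Q) (concat_compat hPk1 hQ)
    have h2 := hGspec k hk P hPk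
    rw [concat_sum] at h1
    obtain ⟨e1, e2⟩ := abs_lt.mp h1
    obtain ⟨e3, e4⟩ := abs_lt.mp h2
    rw [abs_le]
    constructor <;> linarith
  -- band lemma B (partial band)
  have bandB : ∀ k : ℕ, 1 ≤ k → ∀ u', cs k ≤ u' → u' ≤ cs (k+1) →
      ∀ Q : TaggedDiv1 (cs k) u', Compat1 Q (G (k+1)) →
      |riemannSum1 f Q - (F u' - F (cs k))| ≤ 3 * (η / 2 ^ (k+1)) + η / 2 ^ k := by
    intro k hk u' hu1 hu2 Q hQ
    have hau : a < u' := lt_of_lt_of_le (hagt k hk) hu1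
    have huc : u' < c := lt_of_le_of_lt hu2 (hcslt (k+1))
    obtain ⟨H, hHpos, hHspec⟩ := hint u' hau huc (η / 2 ^ (k+1)) (by positivity)
    obtain ⟨E, hE⟩ := cousin hu2 (G (k+1)) (by
      rintro x ⟨h1, h2⟩
      exact hGpos (k+1) (by omega) x ⟨(hau.le).trans h1, h2⟩)
    obtain ⟨Q', hQ'⟩ := cousin hu1 (fun x => min (H x) (G (k+1) x)) (by
      rintro x ⟨h1, h2⟩
      have hxa : a ≤ x := (hcsa k).trans h1
      exact lt_min (hHpos x ⟨hxa, h2⟩) (hGpos (k+1) (by omega) x ⟨hxa, h2.trans hu2⟩))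
    obtain ⟨P, hP⟩ := cousin (hcsa k) (fun x => min (G k x) (min (H x) (G (k+1) x))) (by
      rintro x ⟨h1, h2⟩
      refine lt_min (hGpos k hk x ⟨h1, h2⟩) (lt_min (hHpos x ⟨h1, h2.trans hu1⟩)
        (hGpos (k+1) (by omega) x ⟨h1, h2.trans (hu1.trans hu2)⟩)))
    have hPk : Compat1 P (G k) := compat_mono hP (fun x _ => min_le_left _ _)
    have hPH : Compat1 P H := compat_mono hP (fun x _ =>
      (min_le_right _ _).trans (min_le_left _ _))
    have hPk1 : Compat1 P (G (k+1)) := compat_mono hP (fun x _ =>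
      (min_le_right _ _).trans (min_le_right _ _))
    have hQ'H : Compat1 Q' H := compat_mono hQ' (fun x _ => min_le_left _ _)
    have hQ'k1 : Compat1 Q' (G (k+1)) := compat_mono hQ' (fun x _ => min_le_right _ _)
    have h1 := hGspec (k+1) (by omega) (concatDiv (concatDiv P Q) E)
      (concat_compat (concat_compat hPk1 hQ) hE)
    have h2 := hGspec (k+1) (by omega) (concatDiv (concatDiv P Q') E)
      (concat_compat (concat_compat hPk1 hQ'k1) hE)
    have h3 := hHspec (concatDiv P Q') (concat_compat hPH hQ'H)
    have h4 := hGspec k hk P hPk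
    rw [concat_sum, concat_sum] at h1 h2
    rw [concat_sum] at h3
    obtain ⟨e1, e2⟩ := abs_lt.mp h1
    obtain ⟨e3, e4⟩ := abs_lt.mp h2
    obtain ⟨e5, e6⟩ := abs_lt.mp h3
    obtain ⟨e7, e8⟩ := abs_lt.mp h4
    rw [abs_le]
    constructor <;> linarith
  -- main claim by induction on the number of bands remaining
  have claim : ∀ m : ℕ, ∀ k : ℕ, 1 ≤ k → ∀ b', cs k ≤ b' → b' < cs (k + m) →
      ∀ Q : TaggedDiv1 (cs k) b', Compat1 Q δ →
      |riemannSum1 f Q - (F b' - F (cs k))| ≤ 6 * η / 2 ^ k := by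
    intro m
    induction m with
    | zero =>
      intro k hk b' h1 h2 Q hQ
      rw [Nat.add_zero] at h2
      exact absurd h1 (not_le.mpr h2)
    | succ m ih =>
      intro k hk b' hb1 hb2 Q hQ
      have hb'c : b' < c := hb2.trans (hcslt _)
      have hpow : (0:ℝ) < 2 ^ k := by positivity
      have hsucc : η / 2 ^ (k+1) = η / 2 ^ k / 2 := by rw [pow_succ]; ring
      by_cases hcase : b' < cs (k+1)
      · have hQf := hupg k (cs k) b' le_rfl hcase.le Q hQ
        have := bandB k hk b' hb1 hcase.le Q hQf
        have h6 : 6 * η / 2 ^ k = 6 * (η / 2 ^ k) := by ring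
        have h0 : 0 ≤ η / 2 ^ k := by positivity
        linarith
      · push_neg at hcase
        have hmem : cs (k+1) ∈ Set.Icc (cs k) b' := ⟨(hcsm (by omega)).le, hcase⟩
        have hstrad : ∀ i : Fin Q.n, Q.t i.castSucc < cs (k+1) → cs (k+1) < Q.t i.succ →
            Q.tag i = cs (k+1) := by
          intro i hlt hgt'
          by_contra hne
          have htmem := tag_mem' Q i
          have h1 : a ≤ Q.tag i := (hcsa k).trans htmem.1
          have h2 : Q.tag i < c := lt_of_le_of_lt htmem.2 hb'c
          have h3 := hgrid (Q.tag i) h1 h2 (k+1) hne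
          have h4 := hQ i ⟨hlt.le, hgt'.le⟩
          simp only [Set.mem_Ioo] at h4
          have h5 : |Q.tag i - cs (k+1)| < δ (Q.tag i) :=
            abs_lt.mpr ⟨by linarith [h4.2], by linarith [h4.1]⟩
          linarith
        have hQpos : ∀ x ∈ Set.Icc (cs k) b', 0 < δ x := fun x hx =>
          hδpos x ⟨(hcsa k).trans hx.1, (hx.2.trans hb'c.le)⟩
        have hQ1 := clampLow_compat hmem.1 hmem.2 hQ hQpos hstrad
        have hQ2 := clampHigh_compat hmem.1 hmem.2 hQ hQpos hstrad
        have hsum := clamp_sum (D := Q) f hmem.1 hmem.2 hstrad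
        have hQ1f := hupg k (cs k) (cs (k+1)) le_rfl le_rfl _ hQ1
        have hA := bandA k hk _ hQ1f
        have hIH := ih (k+1) (by omega) b' hcase
          (by have e : k + 1 + m = k + (m + 1) := by omega
              rw [e]; exact hb2) _ hQ2
        have h6 : 6 * η / 2 ^ (k+1) = 3 * (η / 2 ^ k) := by rw [pow_succ]; ring
        have h6' : 6 * η / 2 ^ k = 6 * (η / 2 ^ k) := by ring
        have h0 : 0 ≤ η / 2 ^ k := by positivity
        obtain ⟨e1, e2⟩ := abs_le.mp hA
        obtain ⟨e3, e4⟩ := abs_le.mp hIH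
        rw [abs_le]
        constructor <;> [linarith ; linarith]
  -- assemble
  refine ⟨δ, hδpos, ?_⟩
  intro D hD
  obtain ⟨b, hb1, hb2, hb3, D', hD', hsum⟩ := top_split hac δ f hδpos hforce D hD
  rw [hδceq] at hb2
  have hδcle1 : δc ≤ c - cs 1 := le_trans (min_le_right _ _) (min_le_left _ _)
  have hδclef : δc ≤ ε / (4 * (|f c| + 1)) := le_trans (min_le_right _ _) (min_le_right _ _)
  have hbc1 : cs 1 ≤ b := by linarith
  have hFb : |F b - L| < ε / 4 := by
    have h := hδ₀ (show b ∈ Set.Iio c from hb3)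
      (show dist b c < δ₀ by
        rw [Real.dist_eq, abs_of_nonpos (by linarith)]
        have : δc ≤ δ₀ := min_le_left _ _
        linarith)
    rwa [Real.dist_eq] at h
  have hfc : |f c| * (c - b) ≤ ε / 4 := by
    have h1 : c - b < δc := by linarith
    have h2 : 0 ≤ |f c| := abs_nonneg _
    have h3 : |f c| * (c - b) ≤ |f c| * (ε / (4 * (|f c| + 1))) := by
      apply mul_le_mul_of_nonneg_left _ h2
      linarith
    have h4 : |f c| * (ε / (4 * (|f c| + 1))) ≤ ε / 4 := by
      have hd : (0:ℝ) < 4 * (|f c| + 1) := by positivity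
      rw [← mul_div_assoc, div_le_div_iff₀ hd (by norm_num : (0:ℝ) < 4)]
      nlinarith [abs_nonneg (f c), hε]
    linarith
  -- split D' at cs 1
  have hstrad1 : ∀ i : Fin D'.n, D'.t i.castSucc < cs 1 → cs 1 < D'.t i.succ →
      D'.tag i = cs 1 := by
    intro i hlt hgt'
    by_contra hne
    have htmem := tag_mem' D' i
    have h1 : a ≤ D'.tag i := htmem.1
    have h2 : D'.tag i < c := lt_of_le_of_lt htmem.2 hb3
    have h3 := hgrid (D'.tag i) h1 h2 1 hne
    have h4 := hD' i ⟨hlt.le, hgt'.le⟩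
    simp only [Set.mem_Ioo] at h4
    have h5 : |D'.tag i - cs 1| < δ (D'.tag i) :=
      abs_lt.mpr ⟨by linarith [h4.2], by linarith [h4.1]⟩
    linarith
  have hD'pos : ∀ x ∈ Set.Icc a b, 0 < δ x := fun x hx =>
    hδpos x ⟨hx.1, hx.2.trans hb3.le⟩
  have hm1 : a ≤ cs 1 := hcsa 1
  have hD1 := clampLow_compat (D := D') hm1 hbc1 hD' hD'pos hstrad1
  have hR := clampHigh_compat (D := D') hm1 hbc1 hD' hD'pos hstrad1
  have hsum1 := clamp_sum (D := D') f hm1 hbc1 hstrad1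
  have hD1f : Compat1 (clampLow D' (cs 1) hm1 hbc1) (G 1) := by
    apply compat_mono hD1
    intro x hx
    have hx0 : cs 0 ≤ x := by rw [hcs0]; exact hx.1
    exact hfine 0 x hx0 hx.2
  have h1 := hGspec 1 le_rfl _ hD1f
  obtain ⟨m, hm⟩ : ∃ m, b < cs (1 + m) := by
    obtain ⟨k0, hk0⟩ := hKex b hb3
    exact ⟨k0, lt_of_lt_of_le hk0 (hcsm.monotone (by omega))⟩
  have h2 := claim m 1 le_rfl b hbc1 hm _ hR
  have hp1 : η / 2 ^ 1 = ε / 16 := by rw [hη]; ring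
  have hp2 : 6 * η / 2 ^ 1 = 3 * ε / 8 := by rw [hη]; ring
  rw [hp1] at h1
  rw [hp2] at h2
  have hfc2 : |f c * (c - b)| ≤ ε / 4 := by
    rw [abs_mul, abs_of_nonneg (by linarith : (0:ℝ) ≤ c - b)]
    exact hfc
  have e : riemannSum1 f D - L = (riemannSum1 f (clampLow D' (cs 1) hm1 hbc1) - F (cs 1))
      + (riemannSum1 f (clampHigh D' (cs 1) hm1 hbc1) - (F b - F (cs 1)))
      + (F b - L) + f c * (c - b) := by
    rw [hsum, ← hsum1]; ring
  rw [e]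
  obtain ⟨g1, g2⟩ := abs_lt.mp h1
  obtain ⟨g3, g4⟩ := abs_le.mp h2
  obtain ⟨g5, g6⟩ := abs_lt.mp hFb
  obtain ⟨g7, g8⟩ := abs_le.mp hfc2
  rw [abs_lt]
  constructor <;> linarith
end

section
/- (Integration by parts for Stieltjes gauge integrals) Suppose V(Δf·Δg; I) = 0, i.e. the interval-point function ([u,v],x) ↦ (f(v)−f(u))(g(v)−g(u)) has Henstock variation zero on the interval I. If ∫_a^b f dg exists for each [a,b] ⊆ I, then ∫_a^b g df also exists and ∫_a^b f dg + ∫_a^b g df = f(b)g(b) − f(a)g(a). -/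
open Set Filter

open scoped ENNReal Classical

/-- The Stieltjes Riemann sum `∑ f(tag)·(g(v) − g(u))` over a tagged division of `[a,b]`. -/
noncomputable def stieltjesSum1 {a b : ℝ} (f g : ℝ → ℝ) (D : TaggedDiv1 a b) : ℝ :=
  ∑ i : Fin D.n, f (D.tag i) * (g (D.t i.succ) - g (D.t i.castSucc))

/-- `f` has Henstock–Kurzweil–Stieltjes integral `A` with respect to `g` on `[a,b]`. -/
def HasHKS (f g : ℝ → ℝ) (a b A : ℝ) : Prop :=
  ∀ ε > 0, ∃ δ : ℝ → ℝ, (∀ x ∈ Set.Icc a b, 0 < δ x) ∧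
    ∀ D : TaggedDiv1 a b, Compat1 D δ → |stieltjesSum1 f g D - A| < ε

/-- The Henstock variation of an interval-point function `h u v x` on `[a,b]`. -/
noncomputable def variation1 (a b : ℝ) (h : ℝ → ℝ → ℝ → ℝ) : ℝ≥0∞ :=
  ⨅ δ ∈ {δ : ℝ → ℝ | ∀ x ∈ Set.Icc a b, 0 < δ x},
    ⨆ D ∈ {D : TaggedDiv1 a b | Compat1 D δ},
      ENNReal.ofReal (∑ i : Fin D.n, |h (D.t i.castSucc) (D.t i.succ) (D.tag i)|)

/-! ### nat-indexed accessors -/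

noncomputable def tN {a b : ℝ} (D : TaggedDiv1 a b) (k : ℕ) : ℝ :=
  D.t ⟨min k D.n, by omega⟩

noncomputable def tagN {a b : ℝ} (D : TaggedDiv1 a b) (k : ℕ) : ℝ :=
  if h : k < D.n then D.tag ⟨k, h⟩ else 0

theorem tN_eq {a b : ℝ} (D : TaggedDiv1 a b) (k : ℕ) (h : k ≤ D.n) :
    tN D k = D.t ⟨k, by omega⟩ := by
  unfold tN; congr 1; ext; simp; omega

theorem tN_zero {a b : ℝ} (D : TaggedDiv1 a b) : tN D 0 = a := by
  rw [tN_eq D 0 (by omega)]; exact D.first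

theorem tN_top {a b : ℝ} (D : TaggedDiv1 a b) : tN D D.n = b := by
  rw [tN_eq D D.n le_rfl]; exact D.last

theorem t_castSucc_eq {a b : ℝ} (D : TaggedDiv1 a b) (i : Fin D.n) :
    D.t i.castSucc = tN D i := by
  rw [tN_eq D i (by omega)]; exact congrArg D.t (Fin.ext (by simp))

theorem t_succ_eq {a b : ℝ} (D : TaggedDiv1 a b) (i : Fin D.n) :
    D.t i.succ = tN D (i + 1) := by
  rw [tN_eq D (i + 1) (by omega)]; exact congrArg D.t (Fin.ext (by simp))

theorem tag_eq {a b : ℝ} (D : TaggedDiv1 a b) (i : Fin D.n) :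
    D.tag i = tagN D i := by
  unfold tagN; rw [dif_pos i.isLt]

theorem tag_memN {a b : ℝ} (D : TaggedDiv1 a b) (k : ℕ) (h : k < D.n) :
    tagN D k ∈ Set.Icc (tN D k) (tN D (k + 1)) := by
  have := D.tag_mem ⟨k, h⟩
  rwa [t_castSucc_eq, t_succ_eq, tag_eq] at this

theorem tN_mono {a b : ℝ} (D : TaggedDiv1 a b) : Monotone (tN D) := by
  intro j k hjk
  exact D.mono (by simp [Fin.le_def]; omega)

theorem compat_iff {a b : ℝ} (D : TaggedDiv1 a b) (δ : ℝ → ℝ) :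
    Compat1 D δ ↔ ∀ k < D.n, Set.Icc (tN D k) (tN D (k + 1)) ⊆
      Set.Ioo (tagN D k - δ (tagN D k)) (tagN D k + δ (tagN D k)) := by
  constructor
  · intro hc k hk
    have := hc ⟨k, hk⟩
    rwa [t_castSucc_eq, t_succ_eq, tag_eq] at this
  · intro hc i
    have := hc i i.isLt
    rwa [← t_castSucc_eq, ← t_succ_eq, ← tag_eq] at this

theorem compat_mono {a b : ℝ} {D : TaggedDiv1 a b} {δ δ' : ℝ → ℝ}
    (h : ∀ x, δ x ≤ δ' x) (hc : Compat1 D δ) : Compat1 D δ' := by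
  intro i
  refine (hc i).trans (Set.Ioo_subset_Ioo ?_ ?_) <;> have := h (D.tag i) <;> linarith

/-! ### dsum -/

noncomputable def dsum {a b : ℝ} (G : ℝ → ℝ → ℝ → ℝ) (D : TaggedDiv1 a b) : ℝ :=
  ∑ i : Fin D.n, G (D.t i.castSucc) (D.t i.succ) (D.tag i)

theorem dsum_range {a b : ℝ} (G : ℝ → ℝ → ℝ → ℝ) (D : TaggedDiv1 a b) :
    dsum G D = ∑ k ∈ Finset.range D.n, G (tN D k) (tN D (k + 1)) (tagN D k) := by
  rw [← Fin.sum_univ_eq_sum_range (fun k => G (tN D k) (tN D (k + 1)) (tagN D k)) D.n]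
  exact Finset.sum_congr rfl fun i _ => by rw [t_castSucc_eq, t_succ_eq, tag_eq]

theorem stieltjesSum1_eq_dsum {a b : ℝ} (f g : ℝ → ℝ) (D : TaggedDiv1 a b) :
    stieltjesSum1 f g D = dsum (fun u v x => f x * (g v - g u)) D := rfl

/-! ### concatenation -/

def TaggedDiv1.concat {a b c : ℝ} (D₁ : TaggedDiv1 a b) (D₂ : TaggedDiv1 b c) :
    TaggedDiv1 a c where
  n := D₁.n + D₂.n
  t := fun i => if h : (i : ℕ) ≤ D₁.n then D₁.t ⟨i, by omega⟩
    else D₂.t ⟨(i : ℕ) - D₁.n, by have := i.isLt; omega⟩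
  tag := fun i => if h : (i : ℕ) < D₁.n then D₁.tag ⟨i, h⟩
    else D₂.tag ⟨(i : ℕ) - D₁.n, by have := i.isLt; omega⟩
  mono := by
    rw [Fin.monotone_iff_le_succ]
    intro i
    rcases lt_or_ge (i : ℕ) D₁.n with h | h
    · simp only [Fin.coe_castSucc, Fin.val_succ]
      rw [dif_pos (by omega : (i:ℕ) ≤ D₁.n), dif_pos (by omega : (i:ℕ)+1 ≤ D₁.n)]
      exact D₁.mono (by simp [Fin.le_def])
    · simp only [Fin.coe_castSucc, Fin.val_succ]
      rcases eq_or_lt_of_le h with h' | h'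
      · rw [dif_pos (by omega : (i:ℕ) ≤ D₁.n), dif_neg (by omega : ¬ (i:ℕ)+1 ≤ D₁.n)]
        have e1 : D₁.t ⟨(i:ℕ), by omega⟩ = b := by
          have : (⟨(i:ℕ), by omega⟩ : Fin (D₁.n+1)) = Fin.last D₁.n := by
            ext; simp [Fin.last]; omega
          rw [this, D₁.last]
        have e2 : D₂.t 0 = b := D₂.first
        rw [e1]
        calc b = D₂.t 0 := e2.symm
        _ ≤ _ := D₂.mono (by simp [Fin.le_def])
      · rw [dif_neg (by omega : ¬ (i:ℕ) ≤ D₁.n), dif_neg (by omega : ¬ (i:ℕ)+1 ≤ D₁.n)]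
        exact D₂.mono (by simp [Fin.le_def]; omega)
  first := by
    beta_reduce
    rw [dif_pos (by simp : ((0 : Fin (D₁.n + D₂.n + 1)) : ℕ) ≤ D₁.n)]
    simpa using D₁.first
  last := by
    beta_reduce
    rcases Nat.eq_zero_or_pos D₂.n with h | h
    · rw [dif_pos (by simp [Fin.last, h] : ((Fin.last (D₁.n + D₂.n)) : ℕ) ≤ D₁.n)]
      have e0 : (Fin.last D₂.n) = 0 := by ext; simp [Fin.last, h]
      have : c = b := by rw [← D₂.last, e0, D₂.first]
      have el : (⟨((Fin.last (D₁.n + D₂.n)):ℕ), by omega⟩ : Fin (D₁.n+1)) = Fin.last D₁.n := by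
        ext; simp [Fin.last, h]
      exact (congrArg D₁.t el).trans (D₁.last.trans this.symm)
    · rw [dif_neg (by simp [Fin.last]; omega : ¬ ((Fin.last (D₁.n + D₂.n)) : ℕ) ≤ D₁.n)]
      have el : (⟨((Fin.last (D₁.n + D₂.n)):ℕ) - D₁.n, by simp [Fin.last]⟩ : Fin (D₂.n+1)) = Fin.last D₂.n := by
        ext; simp [Fin.last]
      exact (congrArg D₂.t el).trans D₂.last
  tag_mem := by
    intro i
    rcases lt_or_ge (i : ℕ) D₁.n with h | h
    · simp only [Fin.coe_castSucc, Fin.val_succ]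
      rw [dif_pos h, dif_pos (by omega : (i:ℕ) ≤ D₁.n), dif_pos (by omega : (i:ℕ)+1 ≤ D₁.n)]
      exact D₁.tag_mem ⟨i, h⟩
    · simp only [Fin.coe_castSucc, Fin.val_succ]
      rw [dif_neg (by omega : ¬ (i:ℕ) < D₁.n), dif_neg (by omega : ¬ (i:ℕ)+1 ≤ D₁.n)]
      rcases eq_or_lt_of_le h with h' | h'
      · rw [dif_pos (by omega : (i:ℕ) ≤ D₁.n)]
        have e1 : D₁.t ⟨(i:ℕ), by omega⟩ = D₂.t ⟨(i:ℕ) - D₁.n, by have := i.isLt; omega⟩ := by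
          have el : (⟨(i:ℕ), by omega⟩ : Fin (D₁.n+1)) = Fin.last D₁.n := by
            ext; simp [Fin.last]; omega
          have e0 : (⟨(i:ℕ) - D₁.n, by have := i.isLt; omega⟩ : Fin (D₂.n+1)) = 0 := by
            ext; simp; omega
          rw [el, D₁.last, e0, D₂.first]
        rw [e1]
        have := D₂.tag_mem ⟨(i:ℕ) - D₁.n, by have := i.isLt; omega⟩
        convert this using 3 <;> simp [Fin.succ, Fin.castSucc, Fin.castAdd, Fin.castLE] <;> omega
      · rw [dif_neg (by omega : ¬ (i:ℕ) ≤ D₁.n)]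
        have := D₂.tag_mem ⟨(i:ℕ) - D₁.n, by have := i.isLt; omega⟩
        convert this using 3 <;> simp [Fin.succ, Fin.castSucc, Fin.castAdd, Fin.castLE] <;> omega

theorem concat_n {a b c : ℝ} (D₁ : TaggedDiv1 a b) (D₂ : TaggedDiv1 b c) :
    (D₁.concat D₂).n = D₁.n + D₂.n := rfl

theorem concat_t_left {a b c : ℝ} (D₁ : TaggedDiv1 a b) (D₂ : TaggedDiv1 b c)
    (i : Fin (D₁.n + D₂.n + 1)) (h : (i : ℕ) ≤ D₁.n) :
    (D₁.concat D₂).t i = D₁.t ⟨i, by omega⟩ := dif_pos h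

theorem concat_t_right {a b c : ℝ} (D₁ : TaggedDiv1 a b) (D₂ : TaggedDiv1 b c)
    (i : Fin (D₁.n + D₂.n + 1)) (h : D₁.n ≤ (i : ℕ)) :
    (D₁.concat D₂).t i = D₂.t ⟨(i : ℕ) - D₁.n, by have := i.isLt; omega⟩ := by
  rcases eq_or_lt_of_le h with h' | h'
  · have e1 : (D₁.concat D₂).t i = D₁.t ⟨(i : ℕ), by omega⟩ := dif_pos (by omega)
    rw [e1]
    have el : (⟨(i:ℕ), by omega⟩ : Fin (D₁.n+1)) = Fin.last D₁.n := by ext; simp [Fin.last]; omega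
    have e0 : (⟨(i:ℕ) - D₁.n, by have := i.isLt; omega⟩ : Fin (D₂.n+1)) = 0 := by ext; simp; omega
    rw [el, D₁.last, e0, D₂.first]
  · exact dif_neg (by omega)

theorem concat_tag_left {a b c : ℝ} (D₁ : TaggedDiv1 a b) (D₂ : TaggedDiv1 b c)
    (i : Fin (D₁.n + D₂.n)) (h : (i : ℕ) < D₁.n) :
    (D₁.concat D₂).tag i = D₁.tag ⟨i, h⟩ := dif_pos h

theorem concat_tag_right {a b c : ℝ} (D₁ : TaggedDiv1 a b) (D₂ : TaggedDiv1 b c)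
    (i : Fin (D₁.n + D₂.n)) (h : D₁.n ≤ (i : ℕ)) :
    (D₁.concat D₂).tag i = D₂.tag ⟨(i : ℕ) - D₁.n, by have := i.isLt; omega⟩ :=
  dif_neg (by omega)

theorem tN_concat_left {a b c : ℝ} (D₁ : TaggedDiv1 a b) (D₂ : TaggedDiv1 b c)
    (k : ℕ) (h : k ≤ D₁.n) : tN (D₁.concat D₂) k = tN D₁ k := by
  have e := concat_t_left D₁ D₂ ⟨min k (D₁.n + D₂.n), by omega⟩
    (show min k (D₁.n + D₂.n) ≤ D₁.n by omega)
  have e2 : tN (D₁.concat D₂) k = (D₁.concat D₂).t ⟨min k (D₁.n + D₂.n), by have := concat_n D₁ D₂; omega⟩ := rfl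
  rw [e2]; refine e.trans ?_
  unfold tN
  congr 1; ext
  show min k (D₁.n + D₂.n) = min k D₁.n
  omega

theorem tN_concat_right {a b c : ℝ} (D₁ : TaggedDiv1 a b) (D₂ : TaggedDiv1 b c)
    (k : ℕ) (h : D₁.n ≤ k) : tN (D₁.concat D₂) k = tN D₂ (k - D₁.n) := by
  have e := concat_t_right D₁ D₂ ⟨min k (D₁.n + D₂.n), by omega⟩
    (show D₁.n ≤ min k (D₁.n + D₂.n) by omega)
  have e2 : tN (D₁.concat D₂) k = (D₁.concat D₂).t ⟨min k (D₁.n + D₂.n), by have := concat_n D₁ D₂; omega⟩ := rfl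
  rw [e2]; refine e.trans ?_
  unfold tN
  congr 1; ext
  show min k (D₁.n + D₂.n) - D₁.n = min (k - D₁.n) D₂.n
  omega

theorem tagN_concat_left {a b c : ℝ} (D₁ : TaggedDiv1 a b) (D₂ : TaggedDiv1 b c)
    (k : ℕ) (h : k < D₁.n) : tagN (D₁.concat D₂) k = tagN D₁ k := by
  unfold tagN
  rw [dif_pos (show k < (D₁.concat D₂).n by have := concat_n D₁ D₂; omega), dif_pos h]
  exact concat_tag_left D₁ D₂ ⟨k, by have := concat_n D₁ D₂; omega⟩ h

theorem tagN_concat_right {a b c : ℝ} (D₁ : TaggedDiv1 a b) (D₂ : TaggedDiv1 b c)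
    (k : ℕ) (h : D₁.n ≤ k) : tagN (D₁.concat D₂) k = tagN D₂ (k - D₁.n) := by
  unfold tagN
  rcases lt_or_ge k (D₁.n + D₂.n) with hk | hk
  · rw [dif_pos (show k < (D₁.concat D₂).n from hk), dif_pos (show k - D₁.n < D₂.n by omega)]
    exact concat_tag_right D₁ D₂ ⟨k, hk⟩ h
  · rw [dif_neg (show ¬ k < (D₁.concat D₂).n by have := concat_n D₁ D₂; omega),
      dif_neg (show ¬ k - D₁.n < D₂.n by omega)]

theorem dsum_concat {a b c : ℝ} (G : ℝ → ℝ → ℝ → ℝ) (D₁ : TaggedDiv1 a b)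
    (D₂ : TaggedDiv1 b c) : dsum G (D₁.concat D₂) = dsum G D₁ + dsum G D₂ := by
  rw [dsum_range, dsum_range, dsum_range, concat_n, Finset.sum_range_add]
  congr 1
  · refine Finset.sum_congr rfl fun k hk => ?_
    simp only [Finset.mem_range] at hk
    rw [tN_concat_left _ _ _ (by omega), tN_concat_left _ _ _ (by omega),
      tagN_concat_left _ _ _ hk]
  · refine Finset.sum_congr rfl fun k hk => ?_
    simp only [Finset.mem_range] at hk
    rw [tN_concat_right _ _ _ (by omega), tN_concat_right _ _ _ (by omega),
      tagN_concat_right _ _ _ (by omega)]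
    congr 2 <;> omega

theorem compat_concat {a b c : ℝ} {D₁ : TaggedDiv1 a b} {D₂ : TaggedDiv1 b c} {δ : ℝ → ℝ}
    (h₁ : Compat1 D₁ δ) (h₂ : Compat1 D₂ δ) : Compat1 (D₁.concat D₂) δ := by
  rw [compat_iff]
  rw [compat_iff] at h₁ h₂
  intro k hk
  rw [concat_n] at hk
  rcases lt_or_ge k D₁.n with h | h
  · rw [tN_concat_left _ _ _ (by omega), tN_concat_left _ _ _ (by omega),
      tagN_concat_left _ _ _ h]
    exact h₁ k h
  · rw [tN_concat_right _ _ _ (by omega), tN_concat_right _ _ _ (by omega),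
      tagN_concat_right _ _ _ (by omega)]
    have e : k + 1 - D₁.n = k - D₁.n + 1 := by omega
    rw [e]
    exact h₂ (k - D₁.n) (by omega)

/-! ### trivial divisions and Cousin's lemma -/

def TaggedDiv1.nil (x : ℝ) : TaggedDiv1 x x where
  n := 0
  t := fun _ => x
  tag := Fin.elim0
  mono := monotone_const
  first := rfl
  last := rfl
  tag_mem := fun i => i.elim0

theorem compat_nil (x : ℝ) (δ : ℝ → ℝ) : Compat1 (TaggedDiv1.nil x) δ := fun i => i.elim0

def TaggedDiv1.single {x y : ℝ} (hxy : x ≤ y) (ξ : ℝ) (hξ : ξ ∈ Set.Icc x y) :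
    TaggedDiv1 x y where
  n := 1
  t := ![x, y]
  tag := ![ξ]
  mono := by
    rw [Fin.monotone_iff_le_succ]
    intro i
    fin_cases i
    simpa using hxy
  first := rfl
  last := rfl
  tag_mem := by
    intro i
    fin_cases i
    simpa using hξ

theorem compat_single {x y ξ : ℝ} (hxy : x ≤ y) (hξ : ξ ∈ Set.Icc x y) {δ : ℝ → ℝ}
    (h : Set.Icc x y ⊆ Set.Ioo (ξ - δ ξ) (ξ + δ ξ)) :
    Compat1 (TaggedDiv1.single hxy ξ hξ) δ := by
  intro i
  fin_cases i
  simpa [TaggedDiv1.single] using h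

theorem cousin (a b : ℝ) (hab : a ≤ b) (δ : ℝ → ℝ) (hδ : ∀ x ∈ Set.Icc a b, 0 < δ x) :
    ∃ D : TaggedDiv1 a b, Compat1 D δ := by
  set s := {x | x ∈ Set.Icc a b ∧ ∃ D : TaggedDiv1 a x, Compat1 D δ} with hs
  have ha : a ∈ s := ⟨⟨le_refl a, hab⟩, TaggedDiv1.nil a, compat_nil a δ⟩
  have hbdd : BddAbove s := ⟨b, fun x hx => hx.1.2⟩
  set c := sSup s with hc
  have hcs : a ≤ c := le_csSup hbdd ha
  have hcb : c ≤ b := csSup_le ⟨a, ha⟩ (fun x hx => hx.1.2)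
  have hδc : 0 < δ c := hδ c ⟨hcs, hcb⟩
  obtain ⟨x, hxs, hxgt⟩ := exists_lt_of_lt_csSup ⟨a, ha⟩ (by linarith : c - δ c < c)
  obtain ⟨⟨hx1, hx2⟩, D, hD⟩ := hxs
  have hxc : x ≤ c := le_csSup hbdd ⟨⟨hx1, hx2⟩, D, hD⟩
  have key : ∀ y : ℝ, c ≤ y → y ≤ b → y < c + δ c → y ∈ s := by
    intro y hcy hyb hylt
    refine ⟨⟨le_trans hcs hcy, hyb⟩, D.concat (TaggedDiv1.single (le_trans hxc hcy) c
      ⟨hxc, hcy⟩), compat_concat hD (compat_single _ _ ?_)⟩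
    intro z hz
    exact ⟨by have := hz.1; linarith, by have := hz.2; linarith⟩
  have hcmem : c ∈ s := key c le_rfl hcb (by linarith)
  rcases eq_or_lt_of_le hcb with h | h
  · obtain ⟨_, Dc, hDc⟩ := hcmem
    exact h ▸ (⟨Dc, hDc⟩ : ∃ D : TaggedDiv1 a c, Compat1 D δ)
  · exfalso
    set y := min b (c + δ c / 2) with hy
    have hcy : c < y := by
      apply lt_min h
      linarith
    have hymem : y ∈ s := key y hcy.le (min_le_left _ _) (by
      have := min_le_right b (c + δ c / 2); linarith)
    have : y ≤ c := le_csSup hbdd hymem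
    linarith

/-! ### refinement: split each interval at its tag -/

def TaggedDiv1.refine {a b : ℝ} (D : TaggedDiv1 a b) : TaggedDiv1 a b where
  n := 2 * D.n
  t := fun j => if h : (j : ℕ) % 2 = 0 then D.t ⟨(j : ℕ) / 2, by have := j.isLt; omega⟩
    else D.tag ⟨(j : ℕ) / 2, by have := j.isLt; omega⟩
  tag := fun j => D.tag ⟨(j : ℕ) / 2, by have := j.isLt; omega⟩
  mono := by
    rw [Fin.monotone_iff_le_succ]
    intro j
    have hj := j.isLt
    simp only [Fin.coe_castSucc, Fin.val_succ]
    rcases Nat.even_or_odd (j : ℕ) with he | ho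
    · have h2 : (j : ℕ) % 2 = 0 := Nat.even_iff.1 he
      rw [dif_pos h2, dif_neg (by omega)]
      have etag : D.tag ⟨((j : ℕ) + 1) / 2, by omega⟩ = D.tag ⟨(j : ℕ) / 2, by omega⟩ :=
        congrArg D.tag (Fin.ext (by show ((j : ℕ) + 1) / 2 = (j : ℕ) / 2; omega))
      rw [etag]
      have := D.tag_mem ⟨(j : ℕ) / 2, by omega⟩
      refine le_trans (le_of_eq ?_) this.1
      exact congrArg D.t (Fin.ext (by simp))
    · have h2 : (j : ℕ) % 2 = 1 := Nat.odd_iff.1 ho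
      rw [dif_neg (by omega), dif_pos (by omega)]
      have := D.tag_mem ⟨(j : ℕ) / 2, by omega⟩
      refine le_trans this.2 (le_of_eq ?_)
      exact congrArg D.t (Fin.ext (by simp; omega))
  first := by
    beta_reduce
    rw [dif_pos (by simp)]
    simpa using D.first
  last := by
    beta_reduce
    rw [dif_pos (by show (2 * D.n) % 2 = 0; omega)]
    have el : (⟨((Fin.last (2 * D.n)) : ℕ) / 2, by
        have : ((Fin.last (2 * D.n)) : ℕ) = 2 * D.n := rfl
        omega⟩ : Fin (D.n + 1)) = Fin.last D.n := by
      ext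
      show (2 * D.n) / 2 = D.n
      omega
    exact (congrArg D.t el).trans D.last
  tag_mem := by
    intro j
    have hj := j.isLt
    simp only [Fin.coe_castSucc, Fin.val_succ]
    rcases Nat.even_or_odd (j : ℕ) with he | ho
    · have h2 : (j : ℕ) % 2 = 0 := Nat.even_iff.1 he
      rw [dif_pos h2, dif_neg (by omega)]
      have etag : D.tag ⟨((j : ℕ) + 1) / 2, by omega⟩ = D.tag ⟨(j : ℕ) / 2, by omega⟩ :=
        congrArg D.tag (Fin.ext (by show ((j : ℕ) + 1) / 2 = (j : ℕ) / 2; omega))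
      rw [etag]
      constructor
      · refine le_trans (le_of_eq ?_) (D.tag_mem ⟨(j : ℕ) / 2, by omega⟩).1
        exact congrArg D.t (Fin.ext (by simp))
      · exact le_rfl
    · have h2 : (j : ℕ) % 2 = 1 := Nat.odd_iff.1 ho
      rw [dif_neg (by omega), dif_pos (by omega)]
      constructor
      · exact le_rfl
      · refine le_trans (D.tag_mem ⟨(j : ℕ) / 2, by omega⟩).2 (le_of_eq ?_)
        exact congrArg D.t (Fin.ext (by simp; omega))

theorem refine_n {a b : ℝ} (D : TaggedDiv1 a b) : D.refine.n = 2 * D.n := rfl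

theorem tN_refine_even {a b : ℝ} (D : TaggedDiv1 a b) (k : ℕ) (h : k ≤ D.n) :
    tN D.refine (2 * k) = tN D k := by
  have e2 : tN D.refine (2 * k) = D.refine.t ⟨2 * k, by have := refine_n D; omega⟩ := by
    rw [tN_eq D.refine (2 * k) (by have := refine_n D; omega)]
  rw [e2, tN_eq D k h]
  have e3 : D.refine.t ⟨2 * k, by have := refine_n D; omega⟩ =
      D.t ⟨(2 * k) / 2, by omega⟩ := dif_pos (by show (2 * k) % 2 = 0; omega)
  rw [e3]
  exact congrArg D.t (Fin.ext (by show (2 * k) / 2 = k; omega))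

theorem tN_refine_odd {a b : ℝ} (D : TaggedDiv1 a b) (k : ℕ) (h : k < D.n) :
    tN D.refine (2 * k + 1) = tagN D k := by
  have e2 : tN D.refine (2 * k + 1) = D.refine.t ⟨2 * k + 1, by have := refine_n D; omega⟩ := by
    rw [tN_eq D.refine (2 * k + 1) (by have := refine_n D; omega)]
  rw [e2, ← tag_eq D ⟨k, h⟩]
  have e3 : D.refine.t ⟨2 * k + 1, by have := refine_n D; omega⟩ =
      D.tag ⟨(2 * k + 1) / 2, by omega⟩ := dif_neg (by show ¬ (2 * k + 1) % 2 = 0; omega)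
  rw [e3]
  exact congrArg D.tag (Fin.ext (by show (2 * k + 1) / 2 = k; omega))

theorem tagN_refine {a b : ℝ} (D : TaggedDiv1 a b) (k : ℕ) (h : k < 2 * D.n) :
    tagN D.refine k = tagN D (k / 2) := by
  unfold tagN
  rw [dif_pos (show k < D.refine.n by have := refine_n D; omega),
    dif_pos (show k / 2 < D.n by omega)]
  rfl

theorem compat_refine {a b : ℝ} {D : TaggedDiv1 a b} {δ : ℝ → ℝ} (hc : Compat1 D δ) :
    Compat1 D.refine δ := by
  rw [compat_iff] at hc ⊢
  intro k hk
  rw [refine_n] at hk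
  have hk2 : k / 2 < D.n := by omega
  have hsub : Set.Icc (tN D.refine k) (tN D.refine (k + 1)) ⊆
      Set.Icc (tN D (k / 2)) (tN D (k / 2 + 1)) := by
    rcases Nat.even_or_odd k with he | ho
    · have h2 : k % 2 = 0 := Nat.even_iff.1 he
      have eL : tN D.refine k = tN D (k / 2) := by
        have := tN_refine_even D (k / 2) (by omega)
        rwa [show 2 * (k / 2) = k by omega] at this
      have eR : tN D.refine (k + 1) = tagN D (k / 2) := by
        have := tN_refine_odd D (k / 2) hk2
        rwa [show 2 * (k / 2) + 1 = k + 1 by omega] at this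
      rw [eL, eR]
      exact Set.Icc_subset_Icc le_rfl (tag_memN D _ hk2).2
    · have h2 : k % 2 = 1 := Nat.odd_iff.1 ho
      have eL : tN D.refine k = tagN D (k / 2) := by
        have := tN_refine_odd D (k / 2) hk2
        rwa [show 2 * (k / 2) + 1 = k by omega] at this
      have eR : tN D.refine (k + 1) = tN D (k / 2 + 1) := by
        have := tN_refine_even D (k / 2 + 1) (by omega)
        rwa [show 2 * (k / 2 + 1) = k + 1 by omega] at this
      rw [eL, eR]
      exact Set.Icc_subset_Icc (tag_memN D _ hk2).1 le_rfl
  rw [tagN_refine D k (by omega)]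
  exact hsub.trans (hc (k / 2) hk2)

theorem sum_range_two_mul (f : ℕ → ℝ) (n : ℕ) :
    ∑ k ∈ Finset.range (2 * n), f k = ∑ i ∈ Finset.range n, (f (2 * i) + f (2 * i + 1)) := by
  induction n with
  | zero => simp
  | succ m ih =>
    have e : 2 * (m + 1) = (2 * m + 1) + 1 := by omega
    rw [e, Finset.sum_range_succ, Finset.sum_range_succ, ih, Finset.sum_range_succ]
    ring

theorem dsum_refine {a b : ℝ} (G : ℝ → ℝ → ℝ → ℝ) (D : TaggedDiv1 a b) :
    dsum G D.refine = ∑ k ∈ Finset.range D.n,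
      (G (tN D k) (tagN D k) (tagN D k) + G (tagN D k) (tN D (k + 1)) (tagN D k)) := by
  rw [dsum_range, refine_n, sum_range_two_mul]
  refine Finset.sum_congr rfl fun k hk => ?_
  simp only [Finset.mem_range] at hk
  have e1 : tN D.refine (2 * k) = tN D k := tN_refine_even D k (by omega)
  have e2 : tN D.refine (2 * k + 1) = tagN D k := tN_refine_odd D k hk
  have e3 : tN D.refine (2 * k + 1 + 1) = tN D (k + 1) := by
    have := tN_refine_even D (k + 1) (by omega)
    rwa [show 2 * (k + 1) = 2 * k + 1 + 1 by omega] at this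
  have e4 : tagN D.refine (2 * k) = tagN D k := by
    rw [tagN_refine D _ (by omega)]; congr 1; omega
  have e5 : tagN D.refine (2 * k + 1) = tagN D k := by
    rw [tagN_refine D _ (by omega)]; congr 1; omega
  rw [e1, e2, e3, e4, e5]

theorem dsum_telescope {a b : ℝ} (F : ℝ → ℝ) (D : TaggedDiv1 a b) :
    ∑ k ∈ Finset.range D.n, (F (tN D (k + 1)) - F (tN D k)) = F b - F a := by
  rw [Finset.sum_range_sub (fun k => F (tN D k)) D.n, tN_top, tN_zero]

theorem var_bound {A B : ℝ} {h : ℝ → ℝ → ℝ → ℝ} (hvar : variation1 A B h = 0)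
    {ε : ℝ} (hε : 0 < ε) : ∃ δ : ℝ → ℝ, (∀ x ∈ Set.Icc A B, 0 < δ x) ∧
    ∀ D : TaggedDiv1 A B, Compat1 D δ → dsum (fun u v x => |h u v x|) D < ε := by
  have h0 : variation1 A B h < ENNReal.ofReal ε := by
    rw [hvar]; exact ENNReal.ofReal_pos.2 hε
  unfold variation1 at h0
  rw [iInf_lt_iff] at h0
  obtain ⟨δ, h0⟩ := h0
  rw [iInf_lt_iff] at h0
  obtain ⟨hδ, hlt⟩ := h0
  refine ⟨δ, hδ, fun D hD => ?_⟩
  have hle : ENNReal.ofReal (∑ i : Fin D.n, |h (D.t i.castSucc) (D.t i.succ) (D.tag i)|) ≤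
      ⨆ D ∈ {D : TaggedDiv1 A B | Compat1 D δ},
        ENNReal.ofReal (∑ i : Fin D.n, |h (D.t i.castSucc) (D.t i.succ) (D.tag i)|) :=
    le_iSup₂ (f := fun (D : TaggedDiv1 A B) (_ : D ∈ {D : TaggedDiv1 A B | Compat1 D δ}) =>
      ENNReal.ofReal (∑ i : Fin D.n, |h (D.t i.castSucc) (D.t i.succ) (D.tag i)|)) D hD
  have := lt_of_le_of_lt hle hlt
  exact (ENNReal.ofReal_lt_ofReal_iff hε).1 this

/-- **Integration by parts.** If `V(Δf·Δg; [A,B]) = 0` and `∫ₐᵇ f dg` exists for every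
`[a,b] ⊆ [A,B]`, then `∫ₐᵇ g df` exists as well and
`∫ₐᵇ f dg + ∫ₐᵇ g df = f(b)g(b) − f(a)g(a)`. -/
theorem integration_by_parts (A B : ℝ) (hAB : A < B) (f g : ℝ → ℝ)
    (hvar : variation1 A B (fun u v _ => (f v - f u) * (g v - g u)) = 0)
    (S : ℝ → ℝ → ℝ)
    (hfg : ∀ a b, A ≤ a → a < b → b ≤ B → HasHKS f g a b (S a b)) :
    ∀ a b, A ≤ a → a < b → b ≤ B →
      ∃ T : ℝ, HasHKS g f a b T ∧ S a b + T = f b * g b - f a * g a := by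
  intro a b hAa hab hbB
  refine ⟨f b * g b - f a * g a - S a b, ?_, by ring⟩
  intro ε hε
  have hε2 : 0 < ε / 2 := by linarith
  obtain ⟨δ1, hδ1pos, hδ1⟩ := var_bound hvar hε2
  obtain ⟨δ0, hδ0pos, hδ0⟩ := hfg a b hAa hab hbB (ε / 2) hε2
  have hsub : Set.Icc a b ⊆ Set.Icc A B := Set.Icc_subset_Icc hAa hbB
  refine ⟨fun x => min (δ0 x) (δ1 x),
    fun x hx => lt_min (hδ0pos x hx) (hδ1pos x (hsub hx)), ?_⟩
  intro D hD
  have hD0 : Compat1 D δ0 := compat_mono (fun x => min_le_left _ _) hD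
  have hD1 : Compat1 D δ1 := compat_mono (fun x => min_le_right _ _) hD
  obtain ⟨L, hL⟩ := cousin A a hAa δ1
    (fun x hx => hδ1pos x (Set.Icc_subset_Icc le_rfl (by linarith) hx))
  obtain ⟨R, hR⟩ := cousin b B hbB δ1
    (fun x hx => hδ1pos x (Set.Icc_subset_Icc (by linarith) le_rfl hx))
  set habs : ℝ → ℝ → ℝ → ℝ :=
    fun u v x => |(fun u v (_ : ℝ) => (f v - f u) * (g v - g u)) u v x| with hhabs
  set E := L.concat (D.refine.concat R) with hE
  have hEc : Compat1 E δ1 := compat_concat hL (compat_concat (compat_refine hD1) hR)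
  have hEsum : dsum habs E < ε / 2 := hδ1 E hEc
  have hrle : dsum habs D.refine ≤ dsum habs E := by
    rw [hE, dsum_concat, dsum_concat]
    have n1 : 0 ≤ dsum habs L := Finset.sum_nonneg fun i _ => abs_nonneg _
    have n2 : 0 ≤ dsum habs R := Finset.sum_nonneg fun i _ => abs_nonneg _
    linarith
  set C := dsum (fun u v x => (f v - f x) * (g v - g x) - (f u - f x) * (g u - g x)) D with hC
  have hCle : |C| ≤ dsum habs D.refine := by
    rw [hC, dsum_range, dsum_refine]
    refine le_trans (Finset.abs_sum_le_sum_abs _ _) (Finset.sum_le_sum fun k hk => ?_)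
    simp only [hhabs]
    refine le_trans (abs_sub _ _) (le_of_eq ?_)
    rw [show (f (tN D k) - f (tagN D k)) * (g (tN D k) - g (tagN D k)) =
      (f (tagN D k) - f (tN D k)) * (g (tagN D k) - g (tN D k)) from by ring]
    exact add_comm _ _
  have hCb : |C| < ε / 2 := lt_of_le_of_lt hCle (lt_of_le_of_lt hrle hEsum)
  have hX : |stieltjesSum1 f g D - S a b| < ε / 2 := hδ0 D hD0
  have hident : stieltjesSum1 f g D + stieltjesSum1 g f D + C = f b * g b - f a * g a := by
    have e1 : stieltjesSum1 f g D + stieltjesSum1 g f D + C =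
        ∑ k ∈ Finset.range D.n,
          (f (tN D (k + 1)) * g (tN D (k + 1)) - f (tN D k) * g (tN D k)) := by
      rw [stieltjesSum1_eq_dsum f g D, stieltjesSum1_eq_dsum g f D, hC,
        dsum_range, dsum_range, dsum_range, ← Finset.sum_add_distrib, ← Finset.sum_add_distrib]
      exact Finset.sum_congr rfl fun k _ => by ring
    rw [e1]
    exact dsum_telescope (fun x => f x * g x) D
  have hkey : stieltjesSum1 g f D - (f b * g b - f a * g a - S a b) =
      (S a b - stieltjesSum1 f g D) - C := by linarith
  rw [hkey]
  calc |(S a b - stieltjesSum1 f g D) - C| ≤ |S a b - stieltjesSum1 f g D| + |C| := abs_sub _ _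
    _ = |stieltjesSum1 f g D - S a b| + |C| := by rw [abs_sub_comm]
    _ < ε / 2 + ε / 2 := add_lt_add hX hCb
    _ = ε := by ring
end

section
/- (Fubini for gauge integrals) Let I × J ⊆ ℝᵐ × ℝⁿ be a brick and f(x,y) Henstock–Kurzweil integrable on K = I × J with integral F. Then g(x) := ∫_J f(x,·) dν exists for all x outside a set of μ-outer measure zero on I; setting g(x) = 0 on the exceptional set, g is HK-integrable on I and ∫_I g dμ = F. Symmetrically, h(y) := ∫_I f(·,y) dμ exists for a.e. y and ∫_J h dν = F. -/
open Set Filter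

/-- A brick (compact non-degenerate interval) in `ι → ℝ`. -/
structure Brick (ι : Type*) [Fintype ι] where
  lower : ι → ℝ
  upper : ι → ℝ
  lt : ∀ j, lower j < upper j

variable {ι : Type*} [Fintype ι]

namespace Brick

/-- The underlying closed set of a brick. -/
def toSet (I : Brick ι) : Set (ι → ℝ) := {x | ∀ j, x j ∈ Set.Icc (I.lower j) (I.upper j)}

/-- The open interior of a brick. -/
def inter (I : Brick ι) : Set (ι → ℝ) := {x | ∀ j, x j ∈ Set.Ioo (I.lower j) (I.upper j)}

/-- The volume of a brick. -/
noncomputable def vol (I : Brick ι) : ℝ := ∏ j, (I.upper j - I.lower j)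

end Brick

/-- A tagged division of a brick `I`: finitely many non-overlapping sub-bricks covering `I`,
each with a tag point belonging to it. -/
structure TaggedDiv {ι : Type*} [Fintype ι] (I : Brick ι) where
  pieces : Finset (Brick ι × (ι → ℝ))
  subset_of_mem : ∀ p ∈ pieces, (p.1 : Brick ι).toSet ⊆ I.toSet
  tag_mem : ∀ p ∈ pieces, p.2 ∈ (p.1 : Brick ι).toSet
  nonoverlap : ∀ p ∈ pieces, ∀ q ∈ pieces, p ≠ q →
    (p.1 : Brick ι).inter ∩ (q.1 : Brick ι).inter = ∅
  cover : I.toSet = ⋃ p ∈ pieces, (p.1 : Brick ι).toSet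

/-- A gauge on a brick: a function positive at each point of the brick. -/
def IsGauge (I : Brick ι) (δ : (ι → ℝ) → ℝ) : Prop := ∀ x ∈ I.toSet, 0 < δ x

/-- A tagged division is compatible with the gauge `δ` if each brick lies in the open ball
of radius `δ` about its tag. -/
def Compat {I : Brick ι} (D : TaggedDiv I) (δ : (ι → ℝ) → ℝ) : Prop :=
  ∀ p ∈ D.pieces, (p.1 : Brick ι).toSet ⊆ Metric.ball p.2 (δ p.2)

/-- The Riemann sum of `f` over a tagged division. -/
noncomputable def riemannSum {I : Brick ι} (f : (ι → ℝ) → ℝ) (D : TaggedDiv I) : ℝ :=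
  ∑ p ∈ D.pieces, f p.2 * (p.1 : Brick ι).vol

/-- `f` has Henstock–Kurzweil integral `A` on the brick `I`. -/
def HasHK (I : Brick ι) (f : (ι → ℝ) → ℝ) (A : ℝ) : Prop :=
  ∀ ε > 0, ∃ δ : (ι → ℝ) → ℝ, IsGauge I δ ∧
    ∀ D : TaggedDiv I, Compat D δ → |riemannSum f D - A| < ε

open scoped ENNReal Classical

/-- The sum of `|h|` over a tagged division, for an interval-point function `h`. -/
noncomputable def varSum {I : Brick ι} (h : Brick ι → (ι → ℝ) → ℝ) (D : TaggedDiv I) : ℝ :=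
  ∑ p ∈ D.pieces, |h p.1 p.2|

/-- The (Henstock) variation of an interval-point function `h` on a brick `I`. -/
noncomputable def variation (I : Brick ι) (h : Brick ι → (ι → ℝ) → ℝ) : ℝ≥0∞ :=
  ⨅ δ ∈ {δ : (ι → ℝ) → ℝ | IsGauge I δ},
    ⨆ D ∈ {D : TaggedDiv I | Compat D δ}, ENNReal.ofReal (varSum h D)

/-- The variation of `h` on `I` with tags restricted to the set `X`. -/
noncomputable def variationOn (I : Brick ι) (h : Brick ι → (ι → ℝ) → ℝ)
    (X : Set (ι → ℝ)) : ℝ≥0∞ :=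
  variation I (fun J P => if P ∈ X then h J P else 0)

/-- The outer measure of a set `X` in the brick `I`, defined via the Henstock variation of
the volume function restricted to `X`. -/
noncomputable def mustar (I : Brick ι) (X : Set (ι → ℝ)) : ℝ≥0∞ :=
  variationOn I (fun J _ => J.vol) X

/-- The product of a brick in `ι → ℝ` with a brick in `κ → ℝ`, as a brick in `ι ⊕ κ → ℝ`. -/
def Brick.prod {κ : Type*} [Fintype κ] (I : Brick ι) (J : Brick κ) : Brick (ι ⊕ κ) where
  lower := Sum.elim I.lower J.lower
  upper := Sum.elim I.upper J.upper
  lt := by rintro (j | j); exacts [I.lt j, J.lt j]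
section Dev

variable {ι : Type*} [Fintype ι]

namespace Brick

theorem brick_ext {B C : Brick ι} (h1 : B.lower = C.lower) (h2 : B.upper = C.upper) :
    B = C := by cases B; cases C; simp_all

theorem lower_le_upper (B : Brick ι) (j : ι) : B.lower j ≤ B.upper j := (B.lt j).le

theorem lower_mem_toSet (B : Brick ι) : B.lower ∈ B.toSet :=
  fun j => ⟨le_rfl, B.lower_le_upper j⟩

theorem upper_mem_toSet (B : Brick ι) : B.upper ∈ B.toSet :=
  fun j => ⟨B.lower_le_upper j, le_rfl⟩

theorem vol_pos (B : Brick ι) : 0 < B.vol :=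
  Finset.prod_pos fun j _ => sub_pos.2 (B.lt j)

theorem vol_nonneg (B : Brick ι) : 0 ≤ B.vol := B.vol_pos.le

noncomputable def mid (B : Brick ι) : ι → ℝ := fun j => (B.lower j + B.upper j) / 2

theorem mid_mem_inter (B : Brick ι) : B.mid ∈ B.inter := by
  intro j
  have := B.lt j
  constructor <;> (simp only [mid]; linarith)

theorem inter_nonempty (B : Brick ι) : B.inter.Nonempty := ⟨B.mid, B.mid_mem_inter⟩

theorem inter_subset_toSet (B : Brick ι) : B.inter ⊆ B.toSet :=
  fun x hx j => ⟨(hx j).1.le, (hx j).2.le⟩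

theorem lower_le_of_subset {B C : Brick ι} (h : B.toSet ⊆ C.toSet) (j : ι) :
    C.lower j ≤ B.lower j := (h B.lower_mem_toSet j).1

theorem upper_le_of_subset {B C : Brick ι} (h : B.toSet ⊆ C.toSet) (j : ι) :
    B.upper j ≤ C.upper j := (h B.upper_mem_toSet j).2

theorem inter_mono {B C : Brick ι} (h : B.toSet ⊆ C.toSet) : B.inter ⊆ C.inter :=
  fun x hx j => ⟨lt_of_le_of_lt (lower_le_of_subset h j) (hx j).1,
    lt_of_lt_of_le (hx j).2 (upper_le_of_subset h j)⟩

end Brick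

namespace TaggedDiv

variable {I : Brick ι}

theorem tag_mem_base (D : TaggedDiv I) {p} (hp : p ∈ D.pieces) : p.2 ∈ I.toSet :=
  D.subset_of_mem p hp (D.tag_mem p hp)

theorem pieces_nonempty (D : TaggedDiv I) : D.pieces.Nonempty := by
  have h := I.lower_mem_toSet
  rw [D.cover] at h
  simp only [Set.mem_iUnion] at h
  obtain ⟨p, hp, -⟩ := h
  exact ⟨p, hp⟩

/-- The single-piece division of a brick. -/
def single (B : Brick ι) (t : ι → ℝ) (ht : t ∈ B.toSet) : TaggedDiv B where
  pieces := {(B, t)}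
  subset_of_mem := by simp
  tag_mem := by simpa using ht
  nonoverlap := by
    intro p hp q hq hne
    simp only [Finset.mem_singleton] at hp hq
    exact absurd (hp.trans hq.symm) hne
  cover := by simp

@[simp] theorem single_pieces (B : Brick ι) (t : ι → ℝ) (ht : t ∈ B.toSet) :
    (single B t ht).pieces = {(B, t)} := rfl

/-- Gluing: refine each piece of a division by a division of that piece. -/
noncomputable def glue (D : TaggedDiv I) (E : ∀ p ∈ D.pieces, TaggedDiv p.1) :
    TaggedDiv I where
  pieces := D.pieces.attach.biUnion fun p => (E p.1 p.2).pieces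
  subset_of_mem := by
    intro r hr
    simp only [Finset.mem_biUnion, Finset.mem_attach, true_and, Subtype.exists] at hr
    obtain ⟨p, hp, hr⟩ := hr
    exact subset_trans ((E p hp).subset_of_mem r hr) (D.subset_of_mem p hp)
  tag_mem := by
    intro r hr
    simp only [Finset.mem_biUnion, Finset.mem_attach, true_and, Subtype.exists] at hr
    obtain ⟨p, hp, hr⟩ := hr
    exact (E p hp).tag_mem r hr
  nonoverlap := by
    intro r hr s hs hne
    simp only [Finset.mem_biUnion, Finset.mem_attach, true_and, Subtype.exists] at hr hs
    obtain ⟨p, hp, hr⟩ := hr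
    obtain ⟨q, hq, hs⟩ := hs
    by_cases hpq : p = q
    · subst hpq
      exact (E p hp).nonoverlap r hr s hs hne
    · have h1 : r.1.inter ⊆ p.1.inter :=
        Brick.inter_mono ((E p hp).subset_of_mem r hr)
      have h2 : s.1.inter ⊆ q.1.inter :=
        Brick.inter_mono ((E q hq).subset_of_mem s hs)
      have := Set.inter_subset_inter h1 h2
      rw [D.nonoverlap p hp q hq hpq] at this
      exact Set.subset_empty_iff.mp this
  cover := by
    apply Set.Subset.antisymm
    · intro x hx
      rw [D.cover] at hx
      simp only [Set.mem_iUnion] at hx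
      obtain ⟨p, hp, hx⟩ := hx
      rw [(E p hp).cover] at hx
      simp only [Set.mem_iUnion] at hx
      obtain ⟨r, hr, hx⟩ := hx
      simp only [Set.mem_iUnion]
      refine ⟨r, ?_, hx⟩
      simp only [Finset.mem_biUnion, Finset.mem_attach, true_and, Subtype.exists]
      exact ⟨p, hp, hr⟩
    · refine Set.iUnion₂_subset fun r hr => ?_
      simp only [Finset.mem_biUnion, Finset.mem_attach, true_and, Subtype.exists] at hr
      obtain ⟨p, hp, hr⟩ := hr
      exact subset_trans ((E p hp).subset_of_mem r hr) (D.subset_of_mem p hp)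

theorem glue_disjoint (D : TaggedDiv I) (E : ∀ p ∈ D.pieces, TaggedDiv p.1) :
    (D.pieces.attach : Set {x // x ∈ D.pieces}).Pairwise
      (fun p q => Disjoint ((E p.1 p.2).pieces) ((E q.1 q.2).pieces)) := by
  rintro ⟨p, hp⟩ - ⟨q, hq⟩ - hne
  have hpq : p ≠ q := fun h => hne (by simp [h])
  rw [Finset.disjoint_left]
  intro r hr hr'
  have h1 : r.1.inter ⊆ p.1.inter := Brick.inter_mono ((E p hp).subset_of_mem r hr)
  have h2 : r.1.inter ⊆ q.1.inter := Brick.inter_mono ((E q hq).subset_of_mem r hr')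
  have := Set.subset_inter h1 h2
  rw [D.nonoverlap p hp q hq hpq] at this
  obtain ⟨z, hz⟩ := r.1.inter_nonempty
  exact this hz

theorem glue_sum (D : TaggedDiv I) (E : ∀ p ∈ D.pieces, TaggedDiv p.1)
    (φ : Brick ι × (ι → ℝ) → ℝ) :
    ∑ r ∈ (D.glue E).pieces, φ r = ∑ p ∈ D.pieces.attach, ∑ r ∈ (E p.1 p.2).pieces, φ r :=
  Finset.sum_biUnion (glue_disjoint D E)

theorem glue_compat (D : TaggedDiv I) (E : ∀ p ∈ D.pieces, TaggedDiv p.1)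
    {δ : (ι → ℝ) → ℝ} (h : ∀ p hp, Compat (E p hp) δ) : Compat (D.glue E) δ := by
  intro r hr
  simp only [glue, Finset.mem_biUnion, Finset.mem_attach, true_and, Subtype.exists] at hr
  obtain ⟨p, hp, hr⟩ := hr
  exact h p hp r hr

end TaggedDiv

end Dev
section Cousin

variable {ι : Type*} [Fintype ι]

namespace Brick

/-- One of the `2^ι` halves of a brick. -/
noncomputable def half (B : Brick ι) (s : ι → Bool) : Brick ι where
  lower j := if s j then (B.lower j + B.upper j) / 2 else B.lower j
  upper j := if s j then B.upper j else (B.lower j + B.upper j) / 2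
  lt j := by have := B.lt j; by_cases h : s j = true <;> simp [h] <;> linarith

@[simp] theorem half_lower (B : Brick ι) (s : ι → Bool) (j : ι) :
    (B.half s).lower j = if s j then (B.lower j + B.upper j) / 2 else B.lower j := rfl

@[simp] theorem half_upper (B : Brick ι) (s : ι → Bool) (j : ι) :
    (B.half s).upper j = if s j then B.upper j else (B.lower j + B.upper j) / 2 := rfl

theorem half_subset (B : Brick ι) (s : ι → Bool) : (B.half s).toSet ⊆ B.toSet := by
  intro x hx j
  have h := hx j
  have hlt := B.lt j
  simp only [Set.mem_Icc, half_lower, half_upper] at h ⊢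
  cases hs : s j <;> rw [hs] at h <;> simp at h <;> constructor <;> linarith [h.1, h.2]

theorem half_width (B : Brick ι) (s : ι → Bool) (j : ι) :
    (B.half s).upper j - (B.half s).lower j = (B.upper j - B.lower j) / 2 := by
  cases hs : s j <;> simp [hs] <;> ring

theorem half_cover (B : Brick ι) : B.toSet = ⋃ s : ι → Bool, (B.half s).toSet := by
  apply Set.Subset.antisymm
  · intro x hx
    simp only [Set.mem_iUnion]
    refine ⟨fun j => decide ((B.lower j + B.upper j) / 2 ≤ x j), fun j => ?_⟩
    have h := hx j
    simp only [Set.mem_Icc] at h ⊢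
    simp only [half_lower, half_upper]
    by_cases hj : (B.lower j + B.upper j) / 2 ≤ x j
    · have hc : (decide ((B.lower j + B.upper j) / 2 ≤ x j) = true) := decide_eq_true hj
      rw [if_pos hc, if_pos hc]
      exact ⟨hj, h.2⟩
    · have hc : ¬(decide ((B.lower j + B.upper j) / 2 ≤ x j) = true) := by simpa using hj
      rw [if_neg hc, if_neg hc]
      exact ⟨h.1, (not_le.mp hj).le⟩
  · exact Set.iUnion_subset fun s => half_subset B s

theorem half_nonoverlap (B : Brick ι) {s t : ι → Bool} (h : s ≠ t) :
    (B.half s).inter ∩ (B.half t).inter = ∅ := by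
  obtain ⟨j, hj⟩ := Function.ne_iff.mp h
  ext x
  simp only [Set.mem_inter_iff, Set.mem_empty_iff_false, iff_false, not_and]
  intro h1 h2
  have hs := h1 j
  have ht := h2 j
  simp only [Brick.inter, Set.mem_setOf_eq, Set.mem_Ioo, half_lower, half_upper] at hs ht
  by_cases hcs : s j = true <;> by_cases hct : t j = true
  · exact hj (hcs.trans hct.symm)
  · simp [hcs, hct] at hs ht
    linarith [hs.1, hs.2, ht.1, ht.2]
  · simp [hcs, hct] at hs ht
    linarith [hs.1, hs.2, ht.1, ht.2]
  · have e1 : s j = false := by simpa using hcs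
    have e2 : t j = false := by simpa using hct
    exact hj (e1.trans e2.symm)

end Brick

namespace TaggedDiv

/-- The division of a brick into its `2^ι` halves, tagged by lower corners. -/
noncomputable def halves (B : Brick ι) : TaggedDiv B where
  pieces := Finset.univ.image fun s : ι → Bool => (B.half s, (B.half s).lower)
  subset_of_mem := by
    intro p hp
    simp only [Finset.mem_image, Finset.mem_univ, true_and] at hp
    obtain ⟨s, rfl⟩ := hp
    exact Brick.half_subset B s
  tag_mem := by
    intro p hp
    simp only [Finset.mem_image, Finset.mem_univ, true_and] at hp
    obtain ⟨s, rfl⟩ := hp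
    exact Brick.lower_mem_toSet _
  nonoverlap := by
    intro p hp q hq hne
    simp only [Finset.mem_image, Finset.mem_univ, true_and] at hp hq
    obtain ⟨s, rfl⟩ := hp
    obtain ⟨t, rfl⟩ := hq
    have hst : s ≠ t := fun h => hne (by rw [h])
    exact Brick.half_nonoverlap B hst
  cover := by
    apply Set.Subset.antisymm
    · rw [Brick.half_cover B]
      refine Set.iUnion_subset fun s => ?_
      intro x hx
      simp only [Set.mem_iUnion]
      refine ⟨(B.half s, (B.half s).lower), ?_, hx⟩
      simp only [Finset.mem_image, Finset.mem_univ, true_and]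
      exact ⟨s, rfl⟩
    · refine Set.iUnion₂_subset fun p hp => ?_
      simp only [Finset.mem_image, Finset.mem_univ, true_and] at hp
      obtain ⟨s, rfl⟩ := hp
      exact Brick.half_subset B s

end TaggedDiv

/-- If every piece of some division of `B` admits a `δ`-fine division, so does `B`. -/
theorem exists_compat_of_pieces {B : Brick ι} (D : TaggedDiv B) {δ : (ι → ℝ) → ℝ}
    (h : ∀ p ∈ D.pieces, ∃ Dp : TaggedDiv p.1, Compat Dp δ) :
    ∃ D' : TaggedDiv B, Compat D' δ := by
  choose E hE using h
  exact ⟨D.glue E, TaggedDiv.glue_compat D E hE⟩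

/-- **Cousin's lemma**: every gauge on a brick admits a compatible tagged division. -/
theorem cousin_s19 (B : Brick ι) (δ : (ι → ℝ) → ℝ) (hδ : IsGauge B δ) :
    ∃ D : TaggedDiv B, Compat D δ := by
  by_contra hbad
  -- the bisection step
  have step : ∀ C : Brick ι, (¬∃ D : TaggedDiv C, Compat D δ) →
      ∃ s, ¬∃ D : TaggedDiv (C.half s), Compat D δ := by
    intro C hC
    by_contra hall
    push_neg at hall
    apply hC
    apply exists_compat_of_pieces (TaggedDiv.halves C)
    intro p hp
    simp only [TaggedDiv.halves, Finset.mem_image, Finset.mem_univ, true_and] at hp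
    obtain ⟨s, rfl⟩ := hp
    exact hall s
  classical
  have step' : ∀ p : {C : Brick ι // ¬∃ D : TaggedDiv C, Compat D δ},
      ∃ q : {C : Brick ι // ¬∃ D : TaggedDiv C, Compat D δ},
        q.1.toSet ⊆ p.1.toSet ∧
          ∀ j, q.1.upper j - q.1.lower j = (p.1.upper j - p.1.lower j) / 2 := by
    rintro ⟨C, hC⟩
    obtain ⟨s, hs⟩ := step C hC
    exact ⟨⟨C.half s, hs⟩, Brick.half_subset C s, Brick.half_width C s⟩
  choose nxt hnxtsub hnxtw using step'
  set seqT : ℕ → {C : Brick ι // ¬∃ D : TaggedDiv C, Compat D δ} :=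
    fun n => nxt^[n] ⟨B, hbad⟩ with hseqT
  set seq : ℕ → Brick ι := fun n => (seqT n).1 with hseqdef
  have hsucc : ∀ n, seqT (n + 1) = nxt (seqT n) := fun n => Function.iterate_succ_apply' nxt n _
  have hbadseq : ∀ n, ¬∃ D : TaggedDiv (seq n), Compat D δ := fun n => (seqT n).2
  have hnest : ∀ n, (seq (n + 1)).toSet ⊆ (seq n).toSet := by
    intro n
    show (seqT (n + 1)).1.toSet ⊆ (seqT n).1.toSet
    rw [hsucc n]
    exact hnxtsub _
  have hwidth : ∀ n j, (seq n).upper j - (seq n).lower j = (B.upper j - B.lower j) / 2 ^ n := by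
    intro n
    induction n with
    | zero => intro j; simp [hseqdef, hseqT]
    | succ n ih =>
      intro j
      have h := hnxtw (seqT n) j
      rw [← hsucc n] at h
      show (seqT (n + 1)).1.upper j - (seqT (n + 1)).1.lower j = _
      rw [h]
      have := ih j
      rw [show (seqT n).1 = seq n from rfl, this]
      ring
  have hsubB : ∀ n, (seq n).toSet ⊆ B.toSet := by
    intro n
    induction n with
    | zero => exact subset_rfl
    | succ n ih => exact subset_trans (hnest n) ih
  -- monotone endpoints
  have hlmono : ∀ j, Monotone fun n => (seq n).lower j := by
    intro j
    apply monotone_nat_of_le_succ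
    intro n
    exact Brick.lower_le_of_subset (hnest n) j
  have humono : ∀ j, Antitone fun n => (seq n).upper j := by
    intro j
    apply antitone_nat_of_succ_le
    intro n
    exact Brick.upper_le_of_subset (hnest n) j
  have hlu : ∀ j m n, (seq m).lower j ≤ (seq n).upper j := by
    intro j m n
    rcases le_total m n with h | h
    · exact le_trans (hlmono j h) (Brick.lower_le_upper _ j)
    · exact le_trans (Brick.lower_le_upper _ j) (humono j h)
  set x : ι → ℝ := fun j => sSup (Set.range fun n => (seq n).lower j) with hxdef
  have hbdd : ∀ j, BddAbove (Set.range fun n => (seq n).lower j) := by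
    intro j
    exact ⟨(seq 0).upper j, by rintro y ⟨m, rfl⟩; exact hlu j m 0⟩
  have hxmem : ∀ n, x ∈ (seq n).toSet := by
    intro n j
    constructor
    · exact le_csSup (hbdd j) ⟨n, rfl⟩
    · exact csSup_le ⟨(seq 0).lower j, ⟨0, rfl⟩⟩ (by rintro y ⟨m, rfl⟩; exact hlu j m n)
  have hxB : x ∈ B.toSet := hsubB 0 (hxmem 0)
  have hδx : 0 < δ x := hδ x hxB
  -- choose n with widths < δ x
  set M : ℝ := 1 + ∑ j, (B.upper j - B.lower j) with hM
  have hM0 : 0 < M := by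
    have : 0 ≤ ∑ j, (B.upper j - B.lower j) :=
      Finset.sum_nonneg fun j _ => sub_nonneg.2 (B.lower_le_upper j)
    linarith
  have hMj : ∀ j, B.upper j - B.lower j ≤ M := by
    intro j
    have : B.upper j - B.lower j ≤ ∑ j, (B.upper j - B.lower j) :=
      Finset.single_le_sum (f := fun j => B.upper j - B.lower j)
        (fun j _ => sub_nonneg.2 (B.lower_le_upper j)) (Finset.mem_univ j)
    linarith
  obtain ⟨n, hn⟩ : ∃ n : ℕ, (1 / 2 : ℝ) ^ n < δ x / M :=
    exists_pow_lt_of_lt_one (div_pos hδx hM0) (by norm_num)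
  have hwid : ∀ j, (seq n).upper j - (seq n).lower j < δ x := by
    intro j
    rw [hwidth n j]
    have h1 : (B.upper j - B.lower j) / 2 ^ n ≤ M / 2 ^ n :=
      (div_le_div_iff_of_pos_right (by positivity)).mpr (hMj j)
    have h2 : M / 2 ^ n < δ x := by
      have h3 : M * (1 / 2 : ℝ) ^ n < M * (δ x / M) := mul_lt_mul_of_pos_left hn hM0
      have h4 : M * (δ x / M) = δ x := by field_simp
      have h5 : M / 2 ^ n = M * (1 / 2 : ℝ) ^ n := by
        rw [one_div, inv_pow, ← div_eq_mul_inv]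
      rw [h4] at h3
      rw [h5]
      exact h3
    exact lt_of_le_of_lt h1 h2
  refine hbadseq n ⟨TaggedDiv.single (seq n) x (hxmem n), ?_⟩
  intro p hp
  simp only [TaggedDiv.single_pieces, Finset.mem_singleton] at hp
  subst hp
  intro y hy
  rw [Metric.mem_ball, dist_pi_lt_iff hδx]
  intro j
  have hyj := hy j
  have hxj := hxmem n j
  simp only [Set.mem_Icc] at hyj hxj
  rw [Real.dist_eq, abs_sub_lt_iff]
  constructor <;> linarith [hyj.1, hyj.2, hxj.1, hxj.2, hwid j]

end Cousin


section Prod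

variable {ι : Type*} [Fintype ι] {κ : Type*} [Fintype κ]

namespace Brick

theorem mem_prod_toSet {I : Brick ι} {J : Brick κ} {z : ι ⊕ κ → ℝ} :
    z ∈ (I.prod J).toSet ↔ (z ∘ Sum.inl) ∈ I.toSet ∧ (z ∘ Sum.inr) ∈ J.toSet := by
  constructor
  · intro h; exact ⟨fun j => h (Sum.inl j), fun j => h (Sum.inr j)⟩
  · rintro ⟨h1, h2⟩ (j | j)
    exacts [h1 j, h2 j]

theorem mem_prod_inter {I : Brick ι} {J : Brick κ} {z : ι ⊕ κ → ℝ} :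
    z ∈ (I.prod J).inter ↔ (z ∘ Sum.inl) ∈ I.inter ∧ (z ∘ Sum.inr) ∈ J.inter := by
  constructor
  · intro h; exact ⟨fun j => h (Sum.inl j), fun j => h (Sum.inr j)⟩
  · rintro ⟨h1, h2⟩ (j | j)
    exacts [h1 j, h2 j]

theorem elim_mem_prod_toSet {I : Brick ι} {J : Brick κ} {x : ι → ℝ} {y : κ → ℝ} :
    Sum.elim x y ∈ (I.prod J).toSet ↔ x ∈ I.toSet ∧ y ∈ J.toSet := by
  rw [mem_prod_toSet, Sum.elim_comp_inl, Sum.elim_comp_inr]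

theorem prod_vol (I : Brick ι) (J : Brick κ) : (I.prod J).vol = I.vol * J.vol := by
  simp [Brick.vol, Brick.prod, Fintype.prod_sum_type]

theorem prod_subset {L I : Brick ι} {M J : Brick κ} (h1 : L.toSet ⊆ I.toSet)
    (h2 : M.toSet ⊆ J.toSet) : (L.prod M).toSet ⊆ (I.prod J).toSet := by
  intro z hz
  rw [mem_prod_toSet] at hz ⊢
  exact ⟨h1 hz.1, h2 hz.2⟩

theorem prod_ball {L : Brick ι} {M : Brick κ} {x : ι → ℝ} {y : κ → ℝ} {r : ℝ}
    (hL : L.toSet ⊆ Metric.ball x r) (hM : M.toSet ⊆ Metric.ball y r) :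
    (L.prod M).toSet ⊆ Metric.ball (Sum.elim x y) r := by
  intro z hz
  rw [mem_prod_toSet] at hz
  have h1 := Metric.mem_ball.mp (hL hz.1)
  have h2 := Metric.mem_ball.mp (hM hz.2)
  have hr : 0 < r := lt_of_le_of_lt dist_nonneg h1
  rw [Metric.mem_ball, dist_pi_lt_iff hr]
  rintro (j | j)
  · exact lt_of_le_of_lt (dist_le_pi_dist (z ∘ Sum.inl) x j) h1
  · exact lt_of_le_of_lt (dist_le_pi_dist (z ∘ Sum.inr) y j) h2

theorem prod_inj {L L' : Brick ι} {M M' : Brick κ} (h : L.prod M = L'.prod M') :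
    L = L' ∧ M = M' := by
  have hl := congrArg Brick.lower h
  have hu := congrArg Brick.upper h
  constructor <;> apply brick_ext <;> funext j
  exacts [congrFun hl (Sum.inl j), congrFun hu (Sum.inl j),
    congrFun hl (Sum.inr j), congrFun hu (Sum.inr j)]

theorem elim_inj {x x' : ι → ℝ} {y y' : κ → ℝ} (h : Sum.elim x y = Sum.elim x' y') :
    x = x' ∧ y = y' :=
  ⟨funext fun j => congrFun h (Sum.inl j), funext fun j => congrFun h (Sum.inr j)⟩

end Brick

namespace TaggedDiv

variable {I : Brick ι} {J : Brick κ}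

/-- Product of a division of `I` with a family of divisions of `J`. -/
noncomputable def prodDiv (D : TaggedDiv I) (E : ∀ p ∈ D.pieces, TaggedDiv J) :
    TaggedDiv (I.prod J) where
  pieces := D.pieces.attach.biUnion fun p =>
    (E p.1 p.2).pieces.image fun q => (p.1.1.prod q.1, Sum.elim p.1.2 q.2)
  subset_of_mem := by
    intro r hr
    simp only [Finset.mem_biUnion, Finset.mem_attach, true_and, Subtype.exists,
      Finset.mem_image] at hr
    obtain ⟨p, hp, q, hq, rfl⟩ := hr
    exact Brick.prod_subset (D.subset_of_mem p hp) ((E p hp).subset_of_mem q hq)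
  tag_mem := by
    intro r hr
    simp only [Finset.mem_biUnion, Finset.mem_attach, true_and, Subtype.exists,
      Finset.mem_image] at hr
    obtain ⟨p, hp, q, hq, rfl⟩ := hr
    exact Brick.elim_mem_prod_toSet.mpr ⟨D.tag_mem p hp, (E p hp).tag_mem q hq⟩
  nonoverlap := by
    intro r hr s hs hne
    simp only [Finset.mem_biUnion, Finset.mem_attach, true_and, Subtype.exists,
      Finset.mem_image] at hr hs
    obtain ⟨p, hp, q, hq, rfl⟩ := hr
    obtain ⟨p', hp', q', hq', rfl⟩ := hs
    ext z
    simp only [Set.mem_inter_iff, Set.mem_empty_iff_false, iff_false, not_and]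
    intro h1 h2
    rw [Brick.mem_prod_inter] at h1 h2
    by_cases hpp : p = p'
    · subst hpp
      have hqq : q ≠ q' := by
        intro h
        subst h
        exact hne rfl
      have := (E p hp).nonoverlap q hq q' hq' hqq
      have hz : (z ∘ Sum.inr) ∈ q.1.inter ∩ q'.1.inter := ⟨h1.2, h2.2⟩
      rw [this] at hz
      exact hz
    · have := D.nonoverlap p hp p' hp' hpp
      have hz : (z ∘ Sum.inl) ∈ p.1.inter ∩ p'.1.inter := ⟨h1.1, h2.1⟩
      rw [this] at hz
      exact hz
  cover := by
    apply Set.Subset.antisymm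
    · intro z hz
      rw [Brick.mem_prod_toSet] at hz
      obtain ⟨hz1, hz2⟩ := hz
      rw [D.cover] at hz1
      simp only [Set.mem_iUnion] at hz1
      obtain ⟨p, hp, hz1⟩ := hz1
      have := hz2
      rw [(E p hp).cover] at this
      simp only [Set.mem_iUnion] at this
      obtain ⟨q, hq, hz2'⟩ := this
      simp only [Set.mem_iUnion]
      refine ⟨(p.1.prod q.1, Sum.elim p.2 q.2), ?_, ?_⟩
      · simp only [Finset.mem_biUnion, Finset.mem_attach, true_and, Subtype.exists,
          Finset.mem_image]
        exact ⟨p, hp, q, hq, rfl⟩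
      · rw [Brick.mem_prod_toSet]
        exact ⟨hz1, hz2'⟩
    · refine Set.iUnion₂_subset fun r hr => ?_
      simp only [Finset.mem_biUnion, Finset.mem_attach, true_and, Subtype.exists,
        Finset.mem_image] at hr
      obtain ⟨p, hp, q, hq, rfl⟩ := hr
      exact Brick.prod_subset (D.subset_of_mem p hp) ((E p hp).subset_of_mem q hq)

theorem prodDiv_disjoint (D : TaggedDiv I) (E : ∀ p ∈ D.pieces, TaggedDiv J) :
    (D.pieces.attach : Set {x // x ∈ D.pieces}).Pairwise fun p p' =>
      Disjoint ((E p.1 p.2).pieces.image fun q => (p.1.1.prod q.1, Sum.elim p.1.2 q.2))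
        ((E p'.1 p'.2).pieces.image fun q => (p'.1.1.prod q.1, Sum.elim p'.1.2 q.2)) := by
  rintro ⟨p, hp⟩ - ⟨p', hp'⟩ - hne
  have hpp : p ≠ p' := fun h => hne (by simp [h])
  rw [Finset.disjoint_left]
  intro r hr hr'
  simp only [Finset.mem_image] at hr hr'
  obtain ⟨q, hq, hrq⟩ := hr
  obtain ⟨q', hq', hrq'⟩ := hr'
  rw [← hrq'] at hrq
  have h1 := (Brick.prod_inj (congrArg Prod.fst hrq)).1
  have h2 := (Brick.elim_inj (congrArg Prod.snd hrq)).1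
  exact hpp (Prod.ext h1 h2)

theorem prodDiv_sum (D : TaggedDiv I) (E : ∀ p ∈ D.pieces, TaggedDiv J)
    (f : (ι ⊕ κ → ℝ) → ℝ) :
    riemannSum f (D.prodDiv E) =
      ∑ p ∈ D.pieces.attach,
        riemannSum (fun y => f (Sum.elim p.1.2 y)) (E p.1 p.2) * p.1.1.vol := by
  unfold riemannSum prodDiv
  rw [Finset.sum_biUnion (prodDiv_disjoint D E)]
  apply Finset.sum_congr rfl
  intro p _
  rw [Finset.sum_image ?_, Finset.sum_mul]
  · apply Finset.sum_congr rfl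
    intro q _
    rw [Brick.prod_vol]
    ring
  · intro q _ q' _ h
    have h1 := (Brick.prod_inj (congrArg Prod.fst h)).2
    have h2 := (Brick.elim_inj (congrArg Prod.snd h)).2
    exact Prod.ext h1 h2

theorem prodDiv_compat (D : TaggedDiv I) (E : ∀ p ∈ D.pieces, TaggedDiv J)
    {Δ : (ι ⊕ κ → ℝ) → ℝ}
    (h : ∀ p (hp : p ∈ D.pieces), ∀ q ∈ (E p hp).pieces,
      p.1.toSet ⊆ Metric.ball p.2 (Δ (Sum.elim p.2 q.2)) ∧
      q.1.toSet ⊆ Metric.ball q.2 (Δ (Sum.elim p.2 q.2))) :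
    Compat (D.prodDiv E) Δ := by
  intro r hr
  simp only [prodDiv, Finset.mem_biUnion, Finset.mem_attach, true_and, Subtype.exists,
    Finset.mem_image] at hr
  obtain ⟨p, hp, q, hq, rfl⟩ := hr
  exact Brick.prod_ball (h p hp q hq).1 (h p hp q hq).2

end TaggedDiv

end Prod


section Swap

variable {ι : Type*} [Fintype ι] {κ : Type*} [Fintype κ]

namespace Brick

/-- Transport of a brick along `Sum.swap`. -/
def swap (B : Brick (ι ⊕ κ)) : Brick (κ ⊕ ι) where
  lower := B.lower ∘ Sum.swap
  upper := B.upper ∘ Sum.swap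
  lt j := B.lt _

@[simp] theorem swap_lower (B : Brick (ι ⊕ κ)) (j : κ ⊕ ι) :
    B.swap.lower j = B.lower (Sum.swap j) := rfl

@[simp] theorem swap_upper (B : Brick (ι ⊕ κ)) (j : κ ⊕ ι) :
    B.swap.upper j = B.upper (Sum.swap j) := rfl

theorem swap_toSet {B : Brick (ι ⊕ κ)} {z : κ ⊕ ι → ℝ} :
    z ∈ B.swap.toSet ↔ z ∘ Sum.swap ∈ B.toSet := by
  constructor
  · intro h j
    simpa [Sum.swap_swap] using h (Sum.swap j)
  · intro h j
    simpa [Sum.swap_swap] using h (Sum.swap j)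

theorem swap_inter {B : Brick (ι ⊕ κ)} {z : κ ⊕ ι → ℝ} :
    z ∈ B.swap.inter ↔ z ∘ Sum.swap ∈ B.inter := by
  constructor
  · intro h j
    simpa [Sum.swap_swap] using h (Sum.swap j)
  · intro h j
    simpa [Sum.swap_swap] using h (Sum.swap j)

theorem swap_vol (B : Brick (ι ⊕ κ)) : B.swap.vol = B.vol :=
  Fintype.prod_equiv (Equiv.sumComm κ ι) _ _ fun _ => rfl

theorem swap_inj {B C : Brick (ι ⊕ κ)} (h : B.swap = C.swap) : B = C := by
  have hl := congrArg Brick.lower h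
  have hu := congrArg Brick.upper h
  apply brick_ext <;> funext j
  · have := congrFun hl (Sum.swap j)
    simpa [Sum.swap_swap] using this
  · have := congrFun hu (Sum.swap j)
    simpa [Sum.swap_swap] using this

theorem prod_swap (I : Brick ι) (J : Brick κ) : (I.prod J).swap = J.prod I := by
  apply brick_ext <;> funext j <;> cases j <;> rfl

end Brick

theorem comp_swap_swap (z : ι ⊕ κ → ℝ) : (z ∘ Sum.swap) ∘ Sum.swap = z :=
  funext fun j => congrArg z (Sum.swap_swap j)

theorem comp_swap_inj {z w : ι ⊕ κ → ℝ} (h : z ∘ Sum.swap = w ∘ Sum.swap) : z = w := by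
  funext j
  have := congrFun h (Sum.swap j)
  simpa [Sum.swap_swap] using this

theorem dist_comp_swap (z w : ι ⊕ κ → ℝ) : dist (z ∘ Sum.swap) (w ∘ Sum.swap) = dist z w := by
  apply le_antisymm
  · rw [dist_pi_le_iff dist_nonneg]
    intro b
    exact dist_le_pi_dist z w (Sum.swap b)
  · rw [dist_pi_le_iff dist_nonneg]
    intro b
    have := dist_le_pi_dist (z ∘ Sum.swap) (w ∘ Sum.swap) (Sum.swap b)
    simpa [Sum.swap_swap] using this

namespace TaggedDiv

/-- Transport of a tagged division along `Sum.swap`. -/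
noncomputable def swapDiv {B : Brick (ι ⊕ κ)} (D : TaggedDiv B) : TaggedDiv B.swap where
  pieces := D.pieces.image fun p => (p.1.swap, p.2 ∘ Sum.swap)
  subset_of_mem := by
    intro r hr
    simp only [Finset.mem_image] at hr
    obtain ⟨p, hp, rfl⟩ := hr
    intro z hz
    rw [Brick.swap_toSet] at hz ⊢
    exact D.subset_of_mem p hp hz
  tag_mem := by
    intro r hr
    simp only [Finset.mem_image] at hr
    obtain ⟨p, hp, rfl⟩ := hr
    rw [Brick.swap_toSet, comp_swap_swap]
    exact D.tag_mem p hp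
  nonoverlap := by
    intro r hr s hs hne
    simp only [Finset.mem_image] at hr hs
    obtain ⟨p, hp, rfl⟩ := hr
    obtain ⟨q, hq, rfl⟩ := hs
    have hpq : p ≠ q := by
      rintro rfl
      exact hne rfl
    ext z
    simp only [Set.mem_inter_iff, Set.mem_empty_iff_false, iff_false, not_and]
    intro h1 h2
    rw [Brick.swap_inter] at h1 h2
    have : z ∘ Sum.swap ∈ p.1.inter ∩ q.1.inter := ⟨h1, h2⟩
    rw [D.nonoverlap p hp q hq hpq] at this
    exact this
  cover := by
    apply Set.Subset.antisymm
    · intro z hz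
      rw [Brick.swap_toSet, D.cover] at hz
      simp only [Set.mem_iUnion] at hz
      obtain ⟨p, hp, hz⟩ := hz
      simp only [Set.mem_iUnion]
      exact ⟨(p.1.swap, p.2 ∘ Sum.swap), Finset.mem_image_of_mem _ hp,
        Brick.swap_toSet.mpr hz⟩
    · refine Set.iUnion₂_subset fun r hr => ?_
      simp only [Finset.mem_image] at hr
      obtain ⟨p, hp, rfl⟩ := hr
      intro z hz
      rw [Brick.swap_toSet] at hz ⊢
      exact D.subset_of_mem p hp hz

end TaggedDiv

theorem taggedDiv_cast_pieces {B C : Brick (ι ⊕ κ)} (h : B = C) (D : TaggedDiv B) :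
    (h ▸ D : TaggedDiv C).pieces = D.pieces := by
  cases h; rfl

/-- HK integrability transports along `Sum.swap`. -/
theorem hasHK_swap {I : Brick ι} {J : Brick κ} {f : (ι ⊕ κ → ℝ) → ℝ} {F : ℝ}
    (hf : HasHK (I.prod J) f F) :
    HasHK (J.prod I) (fun w => f (w ∘ Sum.swap)) F := by
  intro ε hε
  obtain ⟨Δ, hΔg, hΔ⟩ := hf ε hε
  refine ⟨fun w => Δ (w ∘ Sum.swap), ?_, ?_⟩
  · intro w hw
    apply hΔg
    rw [← Brick.prod_swap I J] at hw
    exact Brick.swap_toSet.mp hw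
  · intro D' hD'
    -- transport `D'` back to a division of `I.prod J`
    have hcast : (J.prod I).swap = I.prod J := Brick.prod_swap J I
    set D : TaggedDiv (I.prod J) := hcast ▸ D'.swapDiv with hD
    have hpieces : D.pieces = D'.pieces.image fun p => (p.1.swap, p.2 ∘ Sum.swap) :=
      taggedDiv_cast_pieces hcast D'.swapDiv
    have hcompat : Compat D Δ := by
      intro r hr
      rw [hpieces] at hr
      simp only [Finset.mem_image] at hr
      obtain ⟨p, hp, rfl⟩ := hr
      intro z hz
      rw [Brick.swap_toSet] at hz
      have := hD' p hp hz
      rw [Metric.mem_ball] at this ⊢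
      calc dist z (p.2 ∘ Sum.swap) = dist (z ∘ Sum.swap) ((p.2 ∘ Sum.swap) ∘ Sum.swap) :=
            (dist_comp_swap _ _).symm
        _ = dist (z ∘ Sum.swap) p.2 := by rw [comp_swap_swap]
        _ < Δ ((p.2 ∘ Sum.swap)) := this
    have hsum : riemannSum f D = riemannSum (fun w => f (w ∘ Sum.swap)) D' := by
      unfold riemannSum
      rw [hpieces, Finset.sum_image]
      · apply Finset.sum_congr rfl
        intro p _
        rw [Brick.swap_vol]
      · intro p _ q _ h
        have h1 := Brick.swap_inj (congrArg Prod.fst h)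
        have h2 := comp_swap_inj (congrArg Prod.snd h)
        exact Prod.ext h1 h2
    have := hΔ D hcompat
    rw [hsum] at this
    exact this

end Swap


section VariationAPI

variable {ι : Type*} [Fintype ι]

open MeasureTheory

theorem Brick.toSet_eq_pi (B : Brick ι) :
    B.toSet = Set.pi Set.univ fun j => Set.Icc (B.lower j) (B.upper j) := by
  ext x; simp [Brick.toSet, Set.mem_pi, Set.mem_Icc, forall_and, Pi.le_def]

theorem Brick.inter_eq_pi (B : Brick ι) :
    B.inter = Set.pi Set.univ fun j => Set.Ioo (B.lower j) (B.upper j) := by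
  ext x; simp [Brick.inter, Set.mem_pi, Set.mem_Ioo, forall_and, Pi.le_def]

theorem Brick.volume_toSet (B : Brick ι) : volume B.toSet = ENNReal.ofReal B.vol := by
  rw [Brick.toSet_eq_pi, volume_pi_pi]
  simp only [Real.volume_Icc]
  rw [Brick.vol, ← ENNReal.ofReal_prod_of_nonneg]
  intro j _
  exact sub_nonneg.2 (B.lower_le_upper j)

theorem Brick.volume_inter (B : Brick ι) : volume B.inter = ENNReal.ofReal B.vol := by
  rw [Brick.inter_eq_pi, volume_pi_pi]
  simp only [Real.volume_Ioo]
  rw [Brick.vol, ← ENNReal.ofReal_prod_of_nonneg]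
  intro j _
  exact sub_nonneg.2 (B.lower_le_upper j)

theorem Brick.measurable_toSet (B : Brick ι) : MeasurableSet B.toSet := by
  rw [Brick.toSet_eq_pi]
  exact MeasurableSet.univ_pi fun j => measurableSet_Icc

theorem Brick.measurable_inter (B : Brick ι) : MeasurableSet B.inter := by
  rw [Brick.inter_eq_pi]
  exact MeasurableSet.univ_pi fun j => measurableSet_Ioo

/-- Additivity of volume over a tagged division. -/
theorem TaggedDiv.sum_vol {I : Brick ι} (D : TaggedDiv I) :
    ∑ p ∈ D.pieces, p.1.vol = I.vol := by
  have hdisj : (↑D.pieces : Set (Brick ι × (ι → ℝ))).PairwiseDisjoint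
      fun p => p.1.inter := by
    intro p hp q hq hne
    rw [Function.onFun, Set.disjoint_iff_inter_eq_empty]
    exact D.nonoverlap p hp q hq hne
  have h1 : volume (⋃ p ∈ D.pieces, p.1.inter) = ∑ p ∈ D.pieces, volume p.1.inter :=
    measure_biUnion_finset hdisj fun p _ => p.1.measurable_inter
  have h2 : volume (⋃ p ∈ D.pieces, p.1.inter) ≤ volume I.toSet := by
    apply measure_mono
    exact Set.iUnion₂_subset fun p hp =>
      subset_trans p.1.inter_subset_toSet (D.subset_of_mem p hp)
  have h3 : volume I.toSet ≤ ∑ p ∈ D.pieces, volume p.1.toSet := by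
    rw [D.cover]
    exact measure_biUnion_finset_le _ _
  have h4 : ∑ p ∈ D.pieces, volume p.1.toSet = ∑ p ∈ D.pieces, volume p.1.inter := by
    apply Finset.sum_congr rfl
    intro p _
    rw [p.1.volume_toSet, p.1.volume_inter]
  rw [h4, ← h1] at h3
  have h5 : volume (⋃ p ∈ D.pieces, p.1.inter) = volume I.toSet := le_antisymm h2 h3
  have h6 : ENNReal.ofReal (∑ p ∈ D.pieces, p.1.vol) = ENNReal.ofReal I.vol := by
    rw [ENNReal.ofReal_sum_of_nonneg fun p _ => p.1.vol_nonneg]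
    rw [← I.volume_toSet, ← h5, h1]
    apply Finset.sum_congr rfl
    intro p _
    rw [p.1.volume_inter]
  have := (ENNReal.ofReal_eq_ofReal_iff
    (Finset.sum_nonneg fun p _ => p.1.vol_nonneg) I.vol_nonneg).mp h6
  exact this

theorem varSum_nonneg {I : Brick ι} (h : Brick ι → (ι → ℝ) → ℝ) (D : TaggedDiv I) :
    0 ≤ varSum h D :=
  Finset.sum_nonneg fun p _ => abs_nonneg _

theorem variation_eq_zero_of_forall {I : Brick ι} (h : Brick ι → (ι → ℝ) → ℝ)
    (H : ∀ ε > 0, ∃ δ, IsGauge I δ ∧ ∀ D : TaggedDiv I, Compat D δ → varSum h D ≤ ε) :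
    variation I h = 0 := by
  refine le_antisymm ?_ zero_le
  refine ENNReal.le_of_forall_pos_le_add fun ε hε _ => ?_
  rw [zero_add]
  obtain ⟨δ, hδ, hb⟩ := H ε (by exact_mod_cast hε)
  have h1 : variation I h ≤ ⨆ D ∈ {D : TaggedDiv I | Compat D δ}, ENNReal.ofReal (varSum h D) :=
    iInf₂_le δ hδ
  refine le_trans h1 ?_
  refine iSup₂_le fun D hD => ?_
  calc ENNReal.ofReal (varSum h D) ≤ ENNReal.ofReal ε := ENNReal.ofReal_le_ofReal (hb D hD)
    _ = (ε : ℝ≥0∞) := ENNReal.ofReal_coe_nnreal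

theorem exists_gauge_of_variation_zero {I : Brick ι} (h : Brick ι → (ι → ℝ) → ℝ)
    (hv : variation I h = 0) {ε : ℝ} (hε : 0 < ε) :
    ∃ δ, IsGauge I δ ∧ ∀ D : TaggedDiv I, Compat D δ → varSum h D < ε := by
  have hlt : variation I h < ENNReal.ofReal ε := by
    rw [hv]; exact ENNReal.ofReal_pos.mpr hε
  rw [variation] at hlt
  simp only [iInf_lt_iff] at hlt
  obtain ⟨δ, hδ, hlt⟩ := hlt
  refine ⟨δ, hδ, fun D hD => ?_⟩
  have h1 : ENNReal.ofReal (varSum h D) ≤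
      ⨆ D ∈ {D : TaggedDiv I | Compat D δ}, ENNReal.ofReal (varSum h D) :=
    le_iSup₂ (f := fun D (_ : D ∈ {D : TaggedDiv I | Compat D δ}) =>
      ENNReal.ofReal (varSum h D)) D hD
  have h2 : ENNReal.ofReal (varSum h D) < ENNReal.ofReal ε := lt_of_le_of_lt h1 hlt
  exact (ENNReal.ofReal_lt_ofReal_iff hε).mp h2

noncomputable def volIf (W : Set (ι → ℝ)) (p : Brick ι × (ι → ℝ)) : ℝ :=
  if p.2 ∈ W then p.1.vol else 0

theorem volIf_pos {W : Set (ι → ℝ)} {p : Brick ι × (ι → ℝ)} (h : p.2 ∈ W) :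
    volIf W p = p.1.vol := if_pos h

theorem volIf_neg {W : Set (ι → ℝ)} {p : Brick ι × (ι → ℝ)} (h : p.2 ∉ W) :
    volIf W p = 0 := if_neg h

theorem volIf_nonneg (W : Set (ι → ℝ)) (p : Brick ι × (ι → ℝ)) : 0 ≤ volIf W p := by
  unfold volIf
  split_ifs
  · exact p.1.vol_nonneg
  · exact le_rfl

theorem mustar_varSum {I : Brick ι} (W : Set (ι → ℝ)) (D : TaggedDiv I) :
    varSum (fun (J : Brick ι) (P : ι → ℝ) => if P ∈ W then J.vol else 0) D =
      ∑ p ∈ D.pieces, volIf W p := by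
  unfold varSum
  apply Finset.sum_congr rfl
  intro p _
  have hb : |(fun (J : Brick ι) (P : ι → ℝ) => if P ∈ W then J.vol else 0) p.1 p.2| =
      |if p.2 ∈ W then p.1.vol else 0| := rfl
  rw [hb]
  by_cases h : p.2 ∈ W
  · rw [if_pos h, volIf_pos h]
    exact abs_of_nonneg p.1.vol_nonneg
  · rw [if_neg h, volIf_neg h]
    exact abs_zero

theorem mustar_mono {I : Brick ι} {X Y : Set (ι → ℝ)} (h : X ⊆ Y) :
    mustar I X ≤ mustar I Y := by
  unfold mustar variationOn variation
  refine iInf₂_mono fun δ hδ => iSup₂_mono fun D hD => ENNReal.ofReal_le_ofReal ?_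
  refine Finset.sum_le_sum fun p hp => ?_
  show |if p.2 ∈ X then p.1.vol else 0| ≤ |if p.2 ∈ Y then p.1.vol else 0|
  split_ifs with h1 h2
  · exact le_rfl
  · exact absurd (h h1) h2
  · rw [abs_zero]; exact abs_nonneg _
  · exact le_rfl

/-- Key tool: a partial `δ'`-fine family with tags in a `mustar`-null set has small volume. -/
theorem mustar_partial_bound {I : Brick ι} {W : Set (ι → ℝ)} (hW : mustar I W = 0)
    {ε : ℝ} (hε : 0 < ε) :
    ∃ δ', IsGauge I δ' ∧ ∀ (D : TaggedDiv I) (T : Finset (Brick ι × (ι → ℝ))),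
      T ⊆ D.pieces → (∀ p ∈ T, p.2 ∈ W ∧ p.1.toSet ⊆ Metric.ball p.2 (δ' p.2)) →
      ∑ p ∈ T, p.1.vol ≤ ε := by
  obtain ⟨δ', hδ', hb⟩ := exists_gauge_of_variation_zero _ hW hε
  refine ⟨δ', hδ', ?_⟩
  intro D T hTsub hT
  classical
  have hEx : ∀ p (hp : p ∈ D.pieces), ∃ Dp : TaggedDiv p.1,
      Compat Dp δ' ∧ (p ∈ T → p ∈ Dp.pieces) := by
    intro p hp
    by_cases hpT : p ∈ T
    · refine ⟨TaggedDiv.single p.1 p.2 (D.tag_mem p hp), ?_, fun _ => by simp⟩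
      intro q hq
      simp only [TaggedDiv.single_pieces, Finset.mem_singleton] at hq
      subst hq
      exact (hT p hpT).2
    · have hg : IsGauge p.1 δ' := fun x hx => hδ' x (D.subset_of_mem p hp hx)
      obtain ⟨Dp, hDp⟩ := cousin_s19 p.1 δ' hg
      exact ⟨Dp, hDp, fun hc => absurd hc hpT⟩
  choose E hE1 hE2 using hEx
  set D' : TaggedDiv I := D.glue E with hD'
  have hcomp : Compat D' δ' := TaggedDiv.glue_compat D E fun p hp => hE1 p hp
  have hvar := hb D' hcomp
  set hfun : Brick ι → (ι → ℝ) → ℝ := fun J P => if P ∈ W then J.vol else 0 with hhfun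
  have key : ∑ p ∈ T, p.1.vol ≤ varSum hfun D' := by
    have step1 : ∑ p ∈ T, p.1.vol = ∑ p ∈ D.pieces, (if p ∈ T then p.1.vol else 0) := by
      rw [Finset.sum_ite_mem, Finset.inter_eq_right.mpr hTsub]
    have step2 : ∑ p ∈ D.pieces, (if p ∈ T then p.1.vol else 0) =
        ∑ p ∈ D.pieces.attach, (if p.1 ∈ T then p.1.1.vol else 0) :=
      (Finset.sum_attach _ _).symm
    rw [step1, step2]
    unfold varSum
    rw [hD', TaggedDiv.glue_sum D E (fun r => |hfun r.1 r.2|)]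
    refine Finset.sum_le_sum fun p _ => ?_
    by_cases hpT : p.1 ∈ T
    · rw [if_pos hpT]
      have hmem : p.1 ∈ (E p.1 p.2).pieces := hE2 p.1 p.2 hpT
      have habs : |hfun p.1.1 p.1.2| = p.1.1.vol := by
        simp only [hhfun]
        rw [if_pos (hT p.1 hpT).1]
        exact abs_of_nonneg p.1.1.vol_nonneg
      calc p.1.1.vol = |hfun p.1.1 p.1.2| := habs.symm
        _ ≤ ∑ r ∈ (E p.1 p.2).pieces, |hfun r.1 r.2| :=
          Finset.single_le_sum (f := fun r => |hfun r.1 r.2|) (fun r _ => abs_nonneg _) hmem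
    · rw [if_neg hpT]
      exact Finset.sum_nonneg fun r _ => abs_nonneg _
  exact le_trans key hvar.le

theorem sum_half_pow_le (s : Finset ℕ) : ∑ n ∈ s, (1 / 2 : ℝ) ^ (n + 1) ≤ 1 := by
  have hsub : s ⊆ Finset.range (s.sup id + 1) := by
    intro n hn
    rw [Finset.mem_range]
    exact Nat.lt_succ_of_le (Finset.le_sup (f := id) hn)
  calc ∑ n ∈ s, (1 / 2 : ℝ) ^ (n + 1)
      ≤ ∑ n ∈ Finset.range (s.sup id + 1), (1 / 2 : ℝ) ^ (n + 1) :=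
        Finset.sum_le_sum_of_subset_of_nonneg hsub fun i _ _ => by positivity
    _ = (1 / 2 : ℝ) * ∑ n ∈ Finset.range (s.sup id + 1), (1 / 2 : ℝ) ^ n := by
        rw [Finset.mul_sum]
        apply Finset.sum_congr rfl
        intro n _
        ring
    _ ≤ (1 / 2 : ℝ) * 2 := by
        have := sum_geometric_two_le (s.sup id + 1)
        nlinarith [this]
    _ = 1 := by norm_num

end VariationAPI

section NullSets

variable {ι : Type*} [Fintype ι]

theorem mustar_iUnion_null {I : Brick ι} {W : ℕ → Set (ι → ℝ)}
    (hW : ∀ n, mustar I (W n) = 0) : mustar I (⋃ n, W n) = 0 := by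
  apply variation_eq_zero_of_forall
  intro ε hε
  have hpos : ∀ n : ℕ, (0:ℝ) < ε / 2 ^ (n + 1) := fun n => by positivity
  choose δ hδg hδb using fun n => mustar_partial_bound (hW n) (hpos n)
  classical
  refine ⟨fun x => if hx : x ∈ ⋃ n, W n then δ (Nat.find (Set.mem_iUnion.mp hx)) x else 1,
    ?_, ?_⟩
  · intro x hx
    show 0 < if hx : x ∈ ⋃ n, W n then δ (Nat.find (Set.mem_iUnion.mp hx)) x else 1
    split
    · exact hδg _ x hx
    · exact one_pos
  · intro D hD
    refine le_trans (le_of_eq (mustar_varSum (⋃ n, W n) D)) ?_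
    simp only [volIf]
    rw [← Finset.sum_filter]
    set T := D.pieces.filter (fun p => p.2 ∈ ⋃ n, W n) with hTdef
    set nf : Brick ι × (ι → ℝ) → ℕ :=
      fun p => if hx : p.2 ∈ ⋃ n, W n then Nat.find (Set.mem_iUnion.mp hx) else 0 with hnf
    have hfib : ∑ p ∈ T, p.1.vol =
        ∑ n ∈ T.image nf, ∑ p ∈ T.filter (fun p => nf p = n), p.1.vol :=
      (Finset.sum_fiberwise_of_maps_to (fun p hp => Finset.mem_image_of_mem nf hp) _).symm
    rw [hfib]
    have hinner : ∀ n ∈ T.image nf,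
        ∑ p ∈ T.filter (fun p => nf p = n), p.1.vol ≤ ε / 2 ^ (n + 1) := by
      intro n _
      apply hδb n D
      · exact subset_trans (Finset.filter_subset _ _) (Finset.filter_subset _ _)
      · intro p hp
        rw [Finset.mem_filter] at hp
        obtain ⟨hpT, hpn⟩ := hp
        rw [hTdef, Finset.mem_filter] at hpT
        obtain ⟨hpD, hpU⟩ := hpT
        have hnfp : nf p = Nat.find (Set.mem_iUnion.mp hpU) := dif_pos hpU
        constructor
        · have := Nat.find_spec (Set.mem_iUnion.mp hpU)
          rw [hnfp] at hpn
          rw [← hpn]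
          exact this
        · have hball : p.1.toSet ⊆ Metric.ball p.2
              (if hx : p.2 ∈ ⋃ n, W n then δ (Nat.find (Set.mem_iUnion.mp hx)) p.2 else 1) :=
            hD p hpD
          have h5 : Nat.find (Set.mem_iUnion.mp hpU) = n := hnfp.symm.trans hpn
          rw [dif_pos hpU, h5] at hball
          exact hball
    calc ∑ n ∈ T.image nf, ∑ p ∈ T.filter (fun p => nf p = n), p.1.vol
        ≤ ∑ n ∈ T.image nf, ε / 2 ^ (n + 1) := Finset.sum_le_sum hinner
      _ = ε * ∑ n ∈ T.image nf, (1 / 2 : ℝ) ^ (n + 1) := by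
          rw [Finset.mul_sum]
          apply Finset.sum_congr rfl
          intro n _
          rw [one_div, inv_pow, div_eq_mul_inv]
      _ ≤ ε * 1 := mul_le_mul_of_nonneg_left (sum_half_pow_le _) hε.le
      _ = ε := mul_one ε

/-- A function weighted by the volume, restricted to a null set, has zero variation. -/
theorem weighted_null {I : Brick ι} {W : Set (ι → ℝ)} (hW : mustar I W = 0)
    (φ : (ι → ℝ) → ℝ) :
    variation I (fun B t => if t ∈ W then φ t * B.vol else 0) = 0 := by
  apply variation_eq_zero_of_forall
  intro ε hε
  classical
  set Wk : ℕ → Set (ι → ℝ) := fun k => {t | t ∈ W ∧ ⌊|φ t|⌋₊ = k} with hWk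
  have hWknull : ∀ k, mustar I (Wk k) = 0 := fun k =>
    le_antisymm (hW ▸ mustar_mono fun t ht => ht.1) zero_le
  have hpos : ∀ k : ℕ, (0:ℝ) < ε / ((k + 1) * 2 ^ (k + 1)) := fun k => by positivity
  choose δ hδg hδb using fun k => mustar_partial_bound (hWknull k) (hpos k)
  refine ⟨fun x => if x ∈ W then δ ⌊|φ x|⌋₊ x else 1, ?_, ?_⟩
  · intro x hx
    show 0 < if x ∈ W then δ ⌊|φ x|⌋₊ x else 1
    split
    · exact hδg _ x hx
    · exact one_pos
  · intro D hD
    have h0 : varSum (fun B t => if t ∈ W then φ t * B.vol else 0) D =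
        ∑ p ∈ D.pieces, (if p.2 ∈ W then |φ p.2| * p.1.vol else 0) := by
      unfold varSum
      apply Finset.sum_congr rfl
      intro p _
      show |if p.2 ∈ W then φ p.2 * p.1.vol else 0| = _
      split_ifs
      · rw [abs_mul, abs_of_nonneg p.1.vol_nonneg]
      · exact abs_zero
    rw [h0, ← Finset.sum_filter]
    set T := D.pieces.filter (fun p => p.2 ∈ W) with hTdef
    set kf : Brick ι × (ι → ℝ) → ℕ := fun p => ⌊|φ p.2|⌋₊ with hkf
    have hfib : ∑ p ∈ T, |φ p.2| * p.1.vol =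
        ∑ k ∈ T.image kf, ∑ p ∈ T.filter (fun p => kf p = k), |φ p.2| * p.1.vol :=
      (Finset.sum_fiberwise_of_maps_to (fun p hp => Finset.mem_image_of_mem kf hp) _).symm
    rw [hfib]
    have hvol : ∀ k ∈ T.image kf,
        ∑ p ∈ T.filter (fun p => kf p = k), p.1.vol ≤ ε / ((k + 1) * 2 ^ (k + 1)) := by
      intro k _
      apply hδb k D
      · exact subset_trans (Finset.filter_subset _ _) (Finset.filter_subset _ _)
      · intro p hp
        rw [Finset.mem_filter] at hp
        obtain ⟨hpT, hpk⟩ := hp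
        rw [hTdef, Finset.mem_filter] at hpT
        obtain ⟨hpD, hpW⟩ := hpT
        refine ⟨⟨hpW, hpk⟩, ?_⟩
        have hball : p.1.toSet ⊆ Metric.ball p.2
            (if p.2 ∈ W then δ ⌊|φ p.2|⌋₊ p.2 else 1) := hD p hpD
        have h5 : ⌊|φ p.2|⌋₊ = k := hpk
        rw [if_pos hpW, h5] at hball
        exact hball
    have hinner : ∀ k ∈ T.image kf,
        ∑ p ∈ T.filter (fun p => kf p = k), |φ p.2| * p.1.vol ≤ ε / 2 ^ (k + 1) := by
      intro k hk
      have h1 : ∑ p ∈ T.filter (fun p => kf p = k), |φ p.2| * p.1.vol ≤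
          ∑ p ∈ T.filter (fun p => kf p = k), ((k : ℝ) + 1) * p.1.vol := by
        apply Finset.sum_le_sum
        intro p hp
        rw [Finset.mem_filter] at hp
        have hlt : |φ p.2| < (k : ℝ) + 1 := by
          have h6 : ⌊|φ p.2|⌋₊ = k := hp.2
          have h7 := Nat.lt_floor_add_one |φ p.2|
          rw [h6] at h7
          exact h7
        exact mul_le_mul_of_nonneg_right hlt.le p.1.vol_nonneg
      have h2 : ∑ p ∈ T.filter (fun p => kf p = k), ((k : ℝ) + 1) * p.1.vol =
          ((k : ℝ) + 1) * ∑ p ∈ T.filter (fun p => kf p = k), p.1.vol := by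
        rw [Finset.mul_sum]
      have h3 : ((k : ℝ) + 1) * ∑ p ∈ T.filter (fun p => kf p = k), p.1.vol ≤
          ((k : ℝ) + 1) * (ε / ((k + 1) * 2 ^ (k + 1))) := by
        apply mul_le_mul_of_nonneg_left (hvol k hk) (by positivity)
      have h4 : ((k : ℝ) + 1) * (ε / ((k + 1) * 2 ^ (k + 1))) = ε / 2 ^ (k + 1) := by
        have hk0 : ((k : ℝ) + 1) ≠ 0 := by positivity
        field_simp
      linarith
    calc ∑ k ∈ T.image kf, ∑ p ∈ T.filter (fun p => kf p = k), |φ p.2| * p.1.vol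
        ≤ ∑ k ∈ T.image kf, ε / 2 ^ (k + 1) := Finset.sum_le_sum hinner
      _ = ε * ∑ k ∈ T.image kf, (1 / 2 : ℝ) ^ (k + 1) := by
          rw [Finset.mul_sum]
          apply Finset.sum_congr rfl
          intro n _
          rw [one_div, inv_pow, div_eq_mul_inv]
      _ ≤ ε * 1 := mul_le_mul_of_nonneg_left (sum_half_pow_le _) hε.le
      _ = ε := mul_one ε

end NullSets

section Cauchy

variable {ι : Type*} [Fintype ι]

theorem hasHK_of_cauchy (I : Brick ι) (f : (ι → ℝ) → ℝ)
    (H : ∀ ε > 0, ∃ δ, IsGauge I δ ∧ ∀ D₁ D₂ : TaggedDiv I, Compat D₁ δ → Compat D₂ δ →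
      |riemannSum f D₁ - riemannSum f D₂| < ε) : ∃ A, HasHK I f A := by
  have hpos : ∀ n : ℕ, (0:ℝ) < 1 / (n + 1) := fun n => by positivity
  choose δ hδg hδb using fun n : ℕ => H (1 / (n + 1)) (hpos n)
  set γ : ℕ → (ι → ℝ) → ℝ := fun n x => (Finset.range (n + 1)).inf' (by simp) fun k => δ k x
    with hγ
  have hγg : ∀ n, IsGauge I (γ n) := by
    intro n x hx
    rw [hγ]
    rw [Finset.lt_inf'_iff]
    intro k _
    exact hδg k x hx
  have hγle : ∀ n k, k ≤ n → ∀ x, γ n x ≤ δ k x := by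
    intro n k hk x
    apply Finset.inf'_le
    rw [Finset.mem_range]
    omega
  choose Dn hDn using fun n => cousin_s19 I (γ n) (hγg n)
  have hfine : ∀ n k, k ≤ n → Compat (Dn n) (δ k) := by
    intro n k hk p hp
    exact subset_trans (hDn n p hp) (Metric.ball_subset_ball (hγle n k hk p.2))
  set u : ℕ → ℝ := fun n => riemannSum f (Dn n) with hu
  have hcauchy : CauchySeq u := by
    rw [Metric.cauchySeq_iff]
    intro ε hε
    obtain ⟨N, hN⟩ := exists_nat_one_div_lt hε
    refine ⟨N, fun m hm n hn => ?_⟩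
    rw [Real.dist_eq]
    exact lt_trans (hδb N (Dn m) (Dn n) (hfine m N hm) (hfine n N hn)) hN
  obtain ⟨A, hA⟩ := cauchySeq_tendsto_of_complete hcauchy
  refine ⟨A, ?_⟩
  intro ε hε
  obtain ⟨N, hN⟩ := exists_nat_one_div_lt (half_pos hε)
  refine ⟨δ N, hδg N, fun D hD => ?_⟩
  have hle : |riemannSum f D - A| ≤ 1 / (N + 1) := by
    have htend : Filter.Tendsto (fun m => |riemannSum f D - u m|) Filter.atTop
        (nhds |riemannSum f D - A|) := (Filter.Tendsto.const_sub _ hA).abs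
    apply le_of_tendsto htend
    rw [Filter.eventually_atTop]
    exact ⟨N, fun m hm => (hδb N D (Dn m) hD (hfine m N hm)).le⟩
  calc |riemannSum f D - A| ≤ 1 / (N + 1) := hle
    _ < ε / 2 := hN
    _ < ε := by linarith

end Cauchy

section Main

variable {ι : Type*} [Fintype ι] {κ : Type*} [Fintype κ]

/-- Infimum of a gauge weight over the tags of a division. -/
noncomputable def tagInf {J : Brick κ} (w : (κ → ℝ) → ℝ) (E : TaggedDiv J) : ℝ :=
  E.pieces.inf' E.pieces_nonempty fun q => w q.2

theorem tagInf_le {J : Brick κ} (w : (κ → ℝ) → ℝ) (E : TaggedDiv J) {q}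
    (hq : q ∈ E.pieces) : tagInf w E ≤ w q.2 :=
  Finset.inf'_le _ hq

theorem tagInf_pos {J : Brick κ} {w : (κ → ℝ) → ℝ} (E : TaggedDiv J)
    (h : ∀ y ∈ J.toSet, 0 < w y) : 0 < tagInf w E :=
  (Finset.lt_inf'_iff _).mpr fun q hq => h q.2 (E.tag_mem_base hq)

theorem section_gauge {I : Brick ι} {J : Brick κ} {Δ : (ι ⊕ κ → ℝ) → ℝ}
    (hΔ : IsGauge (I.prod J) Δ) {x : ι → ℝ} (hx : x ∈ I.toSet) :
    IsGauge J fun y => Δ (Sum.elim x y) :=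
  fun y hy => hΔ _ (Brick.elim_mem_prod_toSet.mpr ⟨hx, hy⟩)

theorem fubini_half (I : Brick ι) (J : Brick κ) (f : (ι ⊕ κ → ℝ) → ℝ) (F : ℝ)
    (hf : HasHK (I.prod J) f F) :
    ∃ (X : Set (ι → ℝ)) (g : (ι → ℝ) → ℝ),
      mustar I X = 0 ∧
      (∀ x ∈ I.toSet, x ∉ X → HasHK J (fun y => f (Sum.elim x y)) (g x)) ∧
      (∀ x ∈ X, g x = 0) ∧ HasHK I g F := by
  set Xn : ℕ → Set (ι → ℝ) := fun n => {x | x ∈ I.toSet ∧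
    ∀ δ' : (κ → ℝ) → ℝ, IsGauge J δ' → ∃ D₁ D₂ : TaggedDiv J, Compat D₁ δ' ∧ Compat D₂ δ' ∧
      1 / ((n : ℝ) + 1) < riemannSum (fun y => f (Sum.elim x y)) D₁ -
        riemannSum (fun y => f (Sum.elim x y)) D₂} with hXndef
  set X : Set (ι → ℝ) := ⋃ n, Xn n with hXdef
  -- Step A : each `Xn n` is null
  have hXnnull : ∀ n, mustar I (Xn n) = 0 := by
    intro n
    apply variation_eq_zero_of_forall
    intro ε hε
    have hε' : (0:ℝ) < ε / (2 * (n + 1)) := by positivity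
    obtain ⟨Δ, hΔg, hΔ⟩ := hf (ε / (2 * (n + 1))) hε'
    have hDall : ∀ x, x ∈ I.toSet → ∃ Da Db : TaggedDiv J,
        (Compat Da fun y => Δ (Sum.elim x y)) ∧ (Compat Db fun y => Δ (Sum.elim x y)) ∧
        (x ∈ Xn n → 1 / ((n : ℝ) + 1) < riemannSum (fun y => f (Sum.elim x y)) Da -
          riemannSum (fun y => f (Sum.elim x y)) Db) ∧ (x ∉ Xn n → Da = Db) := by
      intro x hx
      by_cases hx2 : x ∈ Xn n
      · obtain ⟨D₁, D₂, h1, h2, h3⟩ := hx2.2 _ (section_gauge hΔg hx)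
        exact ⟨D₁, D₂, h1, h2, fun _ => h3, fun h => absurd hx2 h⟩
      · obtain ⟨D₀, h0⟩ := cousin_s19 J _ (section_gauge hΔg hx)
        exact ⟨D₀, D₀, h0, h0, fun h => absurd h hx2, fun _ => rfl⟩
    choose Da Db hca hcb hgap heqq using hDall
    set δI : (ι → ℝ) → ℝ := fun x =>
      if hx : x ∈ I.toSet then
        min (tagInf (fun y => Δ (Sum.elim x y)) (Da x hx))
          (tagInf (fun y => Δ (Sum.elim x y)) (Db x hx))
      else 1 with hδI
    refine ⟨δI, ?_, ?_⟩
    · intro x hx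
      simp only [hδI]
      rw [dif_pos hx]
      exact lt_min (tagInf_pos _ fun y hy => section_gauge hΔg hx y hy)
        (tagInf_pos _ fun y hy => section_gauge hΔg hx y hy)
    · intro D hD
      refine le_trans (le_of_eq (mustar_varSum (Xn n) D)) ?_
      set E1 : ∀ p ∈ D.pieces, TaggedDiv J := fun p hp => Da p.2 (D.tag_mem_base hp) with hE1
      set E2 : ∀ p ∈ D.pieces, TaggedDiv J := fun p hp => Db p.2 (D.tag_mem_base hp) with hE2
      have hP1c : Compat (D.prodDiv E1) Δ := by
        apply TaggedDiv.prodDiv_compat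
        intro p hp q hq
        have hxI : p.2 ∈ I.toSet := D.tag_mem_base hp
        constructor
        · refine subset_trans (hD p hp) (Metric.ball_subset_ball ?_)
          have h1 : δI p.2 = min (tagInf (fun y => Δ (Sum.elim p.2 y)) (Da p.2 hxI))
              (tagInf (fun y => Δ (Sum.elim p.2 y)) (Db p.2 hxI)) := dif_pos hxI
          rw [h1]
          exact le_trans (min_le_left _ _) (tagInf_le _ _ hq)
        · exact hca p.2 hxI q hq
      have hP2c : Compat (D.prodDiv E2) Δ := by
        apply TaggedDiv.prodDiv_compat
        intro p hp q hq
        have hxI : p.2 ∈ I.toSet := D.tag_mem_base hp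
        constructor
        · refine subset_trans (hD p hp) (Metric.ball_subset_ball ?_)
          have h1 : δI p.2 = min (tagInf (fun y => Δ (Sum.elim p.2 y)) (Da p.2 hxI))
              (tagInf (fun y => Δ (Sum.elim p.2 y)) (Db p.2 hxI)) := dif_pos hxI
          rw [h1]
          exact le_trans (min_le_right _ _) (tagInf_le _ _ hq)
        · exact hcb p.2 hxI q hq
      have hb1 := hΔ _ hP1c
      have hb2 := hΔ _ hP2c
      have hs1 := D.prodDiv_sum E1 f
      have hs2 := D.prodDiv_sum E2 f
      have hkey : (1 / ((n : ℝ) + 1)) * ∑ p ∈ D.pieces, volIf (Xn n) p ≤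
          riemannSum f (D.prodDiv E1) - riemannSum f (D.prodDiv E2) := by
        rw [hs1, hs2, ← Finset.sum_sub_distrib, Finset.mul_sum,
          ← Finset.sum_attach D.pieces (fun p => 1 / ((n : ℝ) + 1) * volIf (Xn n) p)]
        refine Finset.sum_le_sum fun p _ => ?_
        have hxI : p.1.2 ∈ I.toSet := D.tag_mem_base p.2
        by_cases hx2 : p.1.2 ∈ Xn n
        · rw [volIf_pos hx2, ← sub_mul]
          exact mul_le_mul_of_nonneg_right (hgap p.1.2 hxI hx2).le p.1.1.vol_nonneg
        · rw [volIf_neg hx2, mul_zero]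
          have he : E1 p.1 p.2 = E2 p.1 p.2 := heqq p.1.2 hxI hx2
          rw [he, sub_self]
      have hlt : riemannSum f (D.prodDiv E1) - riemannSum f (D.prodDiv E2) <
          ε / ((n : ℝ) + 1) := by
        have a1 := abs_lt.mp hb1
        have a2 := abs_lt.mp hb2
        have heq2 : ε / (2 * ((n : ℝ) + 1)) + ε / (2 * ((n : ℝ) + 1)) = ε / ((n : ℝ) + 1) := by
          field_simp
          ring
        linarith [a1.1, a1.2, a2.1, a2.2]
      have hn1 : (0:ℝ) < (n : ℝ) + 1 := by positivity
      have h3 := le_trans hkey hlt.le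
      have hmul : ∀ S : ℝ, (1 / ((n : ℝ) + 1)) * S ≤ ε / ((n : ℝ) + 1) → S ≤ ε := by
        intro S hS
        have h4 : ((n : ℝ) + 1) * ((1 / ((n : ℝ) + 1)) * S) ≤
            ((n : ℝ) + 1) * (ε / ((n : ℝ) + 1)) := mul_le_mul_of_nonneg_left hS hn1.le
        calc S = ((n : ℝ) + 1) * ((1 / ((n : ℝ) + 1)) * S) := by field_simp
          _ ≤ ((n : ℝ) + 1) * (ε / ((n : ℝ) + 1)) := h4
          _ = ε := by field_simp
      exact hmul _ h3
  have hXnull : mustar I X = 0 := by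
    rw [hXdef]
    exact mustar_iUnion_null hXnnull
  -- Step B : integrability of sections off `X`
  have hInt : ∀ x, x ∈ I.toSet → x ∉ X → ∃ A, HasHK J (fun y => f (Sum.elim x y)) A := by
    intro x hx hxX
    apply hasHK_of_cauchy
    intro ε hε
    obtain ⟨n, hn⟩ := exists_nat_one_div_lt hε
    have hnot : x ∉ Xn n := fun h => hxX (Set.mem_iUnion.mpr ⟨n, h⟩)
    have hnot2 : ¬ (∀ δ' : (κ → ℝ) → ℝ, IsGauge J δ' →
        ∃ D₁ D₂ : TaggedDiv J, Compat D₁ δ' ∧ Compat D₂ δ' ∧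
          1 / ((n : ℝ) + 1) < riemannSum (fun y => f (Sum.elim x y)) D₁ -
            riemannSum (fun y => f (Sum.elim x y)) D₂) := fun h => hnot ⟨hx, h⟩
    push_neg at hnot2
    obtain ⟨δ', hδ'g, hub⟩ := hnot2
    refine ⟨δ', hδ'g, fun D₁ D₂ h1 h2 => ?_⟩
    rw [abs_sub_lt_iff]
    constructor
    · exact lt_of_le_of_lt (hub D₁ D₂ h1 h2) hn
    · exact lt_of_le_of_lt (hub D₂ D₁ h2 h1) hn
  set g : (ι → ℝ) → ℝ := fun x =>
    if hx : x ∈ I.toSet ∧ x ∉ X then Classical.choose (hInt x hx.1 hx.2) else 0 with hgdef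
  have hgspec : ∀ x, x ∈ I.toSet → x ∉ X → HasHK J (fun y => f (Sum.elim x y)) (g x) := by
    intro x hx hxX
    have h1 : g x = Classical.choose (hInt x hx hxX) := dif_pos ⟨hx, hxX⟩
    rw [h1]
    exact Classical.choose_spec (hInt x hx hxX)
  have hgzero : ∀ x ∈ X, g x = 0 := fun x hx => dif_neg fun h => h.2 hx
  refine ⟨X, g, hXnull, hgspec, hgzero, ?_⟩
  -- Step C : `g` integrates to `F` on `I`
  intro ε hε
  have hvolpos := I.vol_pos
  set ε' : ℝ := ε / (I.vol + 3) with hε'def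
  have hε' : 0 < ε' := by
    rw [hε'def]
    exact div_pos hε (by linarith)
  obtain ⟨Δ, hΔg, hΔ⟩ := hf ε' hε'
  have hDxE : ∀ x, x ∈ I.toSet → ∃ Dx : TaggedDiv J,
      (Compat Dx fun y => Δ (Sum.elim x y)) ∧
      (x ∉ X → |riemannSum (fun y => f (Sum.elim x y)) Dx - g x| < ε') := by
    intro x hx
    by_cases hxX : x ∈ X
    · obtain ⟨Dx, hDx⟩ := cousin_s19 J _ (section_gauge hΔg hx)
      exact ⟨Dx, hDx, fun h => absurd hxX h⟩
    · obtain ⟨δx, hδxg, hδx⟩ := hgspec x hx hxX ε' hε'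
      have hγg : IsGauge J fun y => min (δx y) (Δ (Sum.elim x y)) :=
        fun y hy => lt_min (hδxg y hy) (section_gauge hΔg hx y hy)
      obtain ⟨Dx, hDxc⟩ := cousin_s19 J _ hγg
      refine ⟨Dx, ?_, fun _ => ?_⟩
      · intro q hq
        exact subset_trans (hDxc q hq) (Metric.ball_subset_ball (min_le_right _ _))
      · refine hδx Dx ?_
        intro q hq
        exact subset_trans (hDxc q hq) (Metric.ball_subset_ball (min_le_left _ _))
  choose Dx hDxc hDxa using hDxE
  set φ : (ι → ℝ) → ℝ := fun x =>
    if hx : x ∈ I.toSet then riemannSum (fun y => f (Sum.elim x y)) (Dx x hx) else 0 with hφ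
  have hvw := weighted_null hXnull φ
  obtain ⟨δs, hδsg, hδsb⟩ := exists_gauge_of_variation_zero _ hvw hε'
  set δI : (ι → ℝ) → ℝ := fun x =>
    if hx : x ∈ I.toSet then min (δs x) (tagInf (fun y => Δ (Sum.elim x y)) (Dx x hx))
    else 1 with hδI
  refine ⟨δI, ?_, ?_⟩
  · intro x hx
    simp only [hδI]
    rw [dif_pos hx]
    exact lt_min (hδsg x hx) (tagInf_pos _ fun y hy => section_gauge hΔg hx y hy)
  · intro D hD
    set E : ∀ p ∈ D.pieces, TaggedDiv J := fun p hp => Dx p.2 (D.tag_mem_base hp) with hE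
    have hDs : Compat D δs := by
      intro p hp
      refine subset_trans (hD p hp) (Metric.ball_subset_ball ?_)
      have hxI := D.tag_mem_base hp
      have h1 : δI p.2 = min (δs p.2)
          (tagInf (fun y => Δ (Sum.elim p.2 y)) (Dx p.2 hxI)) := dif_pos hxI
      rw [h1]
      exact min_le_left _ _
    have hPc : Compat (D.prodDiv E) Δ := by
      apply TaggedDiv.prodDiv_compat
      intro p hp q hq
      have hxI := D.tag_mem_base hp
      constructor
      · refine subset_trans (hD p hp) (Metric.ball_subset_ball ?_)
        have h1 : δI p.2 = min (δs p.2)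
            (tagInf (fun y => Δ (Sum.elim p.2 y)) (Dx p.2 hxI)) := dif_pos hxI
        rw [h1]
        exact le_trans (min_le_right _ _) (tagInf_le _ _ hq)
      · exact hDxc p.2 hxI q hq
    have hPF := hΔ _ hPc
    have hsum := D.prodDiv_sum E f
    have hgD : riemannSum g D = ∑ p ∈ D.pieces.attach, g p.1.2 * p.1.1.vol :=
      (Finset.sum_attach D.pieces fun p => g p.2 * p.1.vol).symm
    have hdiff : |riemannSum g D - riemannSum f (D.prodDiv E)| ≤
        ∑ p ∈ D.pieces.attach,
          |g p.1.2 - riemannSum (fun y => f (Sum.elim p.1.2 y)) (E p.1 p.2)| * p.1.1.vol := by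
      rw [hgD, hsum, ← Finset.sum_sub_distrib]
      refine le_trans (Finset.abs_sum_le_sum_abs _ _) ?_
      refine le_of_eq (Finset.sum_congr rfl fun p _ => ?_)
      rw [← sub_mul, abs_mul, abs_of_nonneg p.1.1.vol_nonneg]
    have hterm : ∀ p ∈ D.pieces.attach,
        |g p.1.2 - riemannSum (fun y => f (Sum.elim p.1.2 y)) (E p.1 p.2)| * p.1.1.vol ≤
        (if p.1.2 ∈ X then |φ p.1.2| * p.1.1.vol else 0) + ε' * p.1.1.vol := by
      intro p _
      have hxI : p.1.2 ∈ I.toSet := D.tag_mem_base p.2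
      by_cases hxX : p.1.2 ∈ X
      · rw [if_pos hxX]
        have hg0 : g p.1.2 = 0 := hgzero _ hxX
        have hφeq : φ p.1.2 = riemannSum (fun y => f (Sum.elim p.1.2 y)) (E p.1 p.2) :=
          dif_pos hxI
        rw [hg0, hφeq, zero_sub, abs_neg]
        have hnn : 0 ≤ ε' * p.1.1.vol := mul_nonneg hε'.le p.1.1.vol_nonneg
        rw [← hφeq]
        linarith
      · rw [if_neg hxX, zero_add]
        have ha := hDxa p.1.2 hxI hxX
        have habs : |g p.1.2 - riemannSum (fun y => f (Sum.elim p.1.2 y)) (E p.1 p.2)| < ε' := by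
          rw [abs_sub_comm]
          exact ha
        exact mul_le_mul_of_nonneg_right habs.le p.1.1.vol_nonneg
    have hvarb : ∑ p ∈ D.pieces.attach,
        (if p.1.2 ∈ X then |φ p.1.2| * p.1.1.vol else 0) < ε' := by
      have h1 := hδsb D hDs
      have h2 : varSum (fun B t => if t ∈ X then φ t * B.vol else 0) D =
          ∑ p ∈ D.pieces, (if p.2 ∈ X then |φ p.2| * p.1.vol else 0) := by
        unfold varSum
        refine Finset.sum_congr rfl fun p _ => ?_
        show |if p.2 ∈ X then φ p.2 * p.1.vol else 0| = _
        split_ifs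
        · rw [abs_mul, abs_of_nonneg p.1.vol_nonneg]
        · exact abs_zero
      rw [Finset.sum_attach D.pieces fun p => if p.2 ∈ X then |φ p.2| * p.1.vol else 0]
      rw [← h2]
      exact h1
    have hvol : ∑ p ∈ D.pieces.attach, ε' * p.1.1.vol = ε' * I.vol := by
      rw [← Finset.mul_sum]
      congr 1
      rw [Finset.sum_attach D.pieces fun p => p.1.vol]
      exact D.sum_vol
    have t2 : ∑ p ∈ D.pieces.attach,
        |g p.1.2 - riemannSum (fun y => f (Sum.elim p.1.2 y)) (E p.1 p.2)| * p.1.1.vol ≤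
        (∑ p ∈ D.pieces.attach, (if p.1.2 ∈ X then |φ p.1.2| * p.1.1.vol else 0)) +
          ∑ p ∈ D.pieces.attach, ε' * p.1.1.vol :=
      le_trans (Finset.sum_le_sum hterm) (le_of_eq Finset.sum_add_distrib)
    have habs2 := abs_sub_le (riemannSum g D) (riemannSum f (D.prodDiv E)) F
    have hchain : |riemannSum g D - F| < ε' + ε' * I.vol + ε' := by
      have hPFlt := hPF
      linarith [hdiff, t2, hvarb, hvol.le, hvol.ge]
    have hfinal : ε' + ε' * I.vol + ε' < ε := by
      have hq : ε' * (I.vol + 3) = ε := by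
        rw [hε'def]
        field_simp
      nlinarith [hε', hvolpos]
    linarith
  
end Main


/-- **Fubini's theorem for gauge integrals.** If `f` is HK-integrable on `I × J` with
integral `F`, then the partial integral `g x = ∫_J f(x,·)` exists for all `x` outside a set
of outer measure zero in `I`, and (set to `0` on the exceptional set) `g` is HK-integrable
on `I` with `∫_I g = F`; symmetrically in the other variable. -/
theorem fubini_hk {κ : Type*} [Fintype κ] (I : Brick ι) (J : Brick κ)
    (f : (ι ⊕ κ → ℝ) → ℝ) (F : ℝ) (hf : HasHK (I.prod J) f F) :
    (∃ (X : Set (ι → ℝ)) (g : (ι → ℝ) → ℝ),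
      mustar I X = 0 ∧
      (∀ x ∈ I.toSet, x ∉ X → HasHK J (fun y => f (Sum.elim x y)) (g x)) ∧
      (∀ x ∈ X, g x = 0) ∧ HasHK I g F) ∧
    (∃ (Y : Set (κ → ℝ)) (h : (κ → ℝ) → ℝ),
      mustar J Y = 0 ∧
      (∀ y ∈ J.toSet, y ∉ Y → HasHK I (fun x => f (Sum.elim x y)) (h y)) ∧
      (∀ y ∈ Y, h y = 0) ∧ HasHK J h F) := by
  constructor
  · exact fubini_half I J f F hf
  · obtain ⟨Y, h, hm, hsec, hzero, hint⟩ :=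
      fubini_half J I (fun w => f (w ∘ Sum.swap)) F (hasHK_swap hf)
    refine ⟨Y, h, hm, ?_, hzero, hint⟩
    intro y hy hyY
    have hs := hsec y hy hyY
    have heqf : (fun x => f (Sum.elim x y)) =
        fun x => (fun w => f (w ∘ Sum.swap)) (Sum.elim y x) := by
      funext x
      show f (Sum.elim x y) = f ((Sum.elim y x) ∘ Sum.swap)
      congr 1
      funext j
      cases j <;> rfl
    rw [heqf]
    exact hs
end
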